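/- arXiv:0805.0311 — 4 statements merged into one kernel-verified Lean document; each statement's English description precedes it below -/
import Mathlib

section
/- For a finite-dimensional real vector space V of dimension n with quadratic form Φ, the canonical map i : V → Cl(Φ) is injective and Cl(Φ) has dimension 2ⁿ as a real vector space; moreover, given a basis (e₁,…,eₙ) of V, the products i(e_{i₁})⋯i(e_{i_k}) for 1 ≤ i₁ < ⋯ < i_k ≤ n together with 1 form a basis of Cl(Φ). -/
open CliffordAlgebra


namespace CliffordBasisAux

noncomputable section

variable {n : ℕ}

abbrev F (n : ℕ) := Finset (Fin n) → ℝ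

def sgn (i : Fin n) (s : Finset (Fin n)) : ℝ := (-1) ^ (s.filter (· < i)).card

lemma sgn_sq (i : Fin n) (s : Finset (Fin n)) : sgn i s * sgn i s = 1 := by
  rw [sgn, ← pow_add, ← two_mul, pow_mul]; norm_num

lemma sgn_insert (i j : Fin n) (s : Finset (Fin n)) (hj : j ∉ s) :
    sgn i (insert j s) = (if j < i then -1 else 1) * sgn i s := by
  rw [sgn, sgn, Finset.filter_insert]
  split_ifs with h
  · rw [Finset.card_insert_of_notMem (by simp [hj]), pow_succ]; ring
  · rw [one_mul]

lemma sgn_insert_self (i : Fin n) (s : Finset (Fin n)) (hi : i ∉ s) :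
    sgn i (insert i s) = sgn i s := by
  rw [sgn_insert i i s hi, if_neg (lt_irrefl i), one_mul]

lemma sgn_erase (i j : Fin n) (s : Finset (Fin n)) (hj : j ∈ s) (hij : i ≠ j) :
    sgn i (s.erase j) = (if j < i then -1 else 1) * sgn i s := by
  have h : s = insert j (s.erase j) := (Finset.insert_erase hj).symm
  rw [show sgn i s = sgn i (insert j (s.erase j)) by rw [← h],
    sgn_insert i j _ (Finset.notMem_erase j s)]
  split_ifs <;> ring

lemma sgn_erase_self (i : Fin n) (s : Finset (Fin n)) :
    sgn i (s.erase i) = sgn i s := by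
  by_cases hi : i ∈ s
  · have h : s = insert i (s.erase i) := (Finset.insert_erase hi).symm
    conv_rhs => rw [h]
    rw [sgn_insert_self i _ (Finset.notMem_erase i s)]
  · rw [Finset.erase_eq_of_notMem hi]

def crt (i : Fin n) : F n →ₗ[ℝ] F n where
  toFun y t := if i ∈ t then sgn i t * y (t.erase i) else 0
  map_add' y z := by funext t; by_cases h : i ∈ t <;> simp [h, mul_add]
  map_smul' c y := by funext t; by_cases h : i ∈ t <;> simp [h]; ring

def ann (i : Fin n) : F n →ₗ[ℝ] F n where
  toFun y t := if i ∈ t then 0 else sgn i t * y (insert i t)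
  map_add' y z := by funext t; by_cases h : i ∈ t <;> simp [h, mul_add]
  map_smul' c y := by funext t; by_cases h : i ∈ t <;> simp [h]; ring

lemma crt_apply (i : Fin n) (y : F n) (t : Finset (Fin n)) :
    crt i y t = if i ∈ t then sgn i t * y (t.erase i) else 0 := rfl

lemma ann_apply (i : Fin n) (y : F n) (t : Finset (Fin n)) :
    ann i y t = if i ∈ t then 0 else sgn i t * y (insert i t) := rfl

lemma crt_crt (i j : Fin n) :
    (crt i * crt j + crt j * crt i : Module.End ℝ (F n)) = 0 := by
  refine LinearMap.ext fun y => funext fun t => ?_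
  simp only [LinearMap.add_apply, Module.End.mul_apply, LinearMap.zero_apply, crt_apply,
    Pi.add_apply, Pi.zero_apply]
  rcases eq_or_ne i j with rfl | hij
  · simp [crt_apply, Finset.notMem_erase]
  by_cases hi : i ∈ t <;> by_cases hj : j ∈ t
  · rw [if_pos hi, if_pos hj, if_pos (Finset.mem_erase.2 ⟨hij.symm, hj⟩),
      if_pos (Finset.mem_erase.2 ⟨hij, hi⟩),
      sgn_erase j i t hi hij.symm, sgn_erase i j t hj hij, Finset.erase_right_comm]
    rcases lt_or_gt_of_ne hij with h | h
    · rw [if_neg (asymm h), if_pos h]; ring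
    · rw [if_pos h, if_neg (asymm h)]; ring
  · rw [if_pos hi, if_neg hj, if_neg (fun h : j ∈ t.erase i => hj (Finset.mem_of_mem_erase h)),
      mul_zero, add_zero]
  · rw [if_neg hi, if_pos hj, if_neg (fun h : i ∈ t.erase j => hi (Finset.mem_of_mem_erase h)),
      mul_zero, zero_add]
  · simp [hi, hj]

lemma ann_ann (i j : Fin n) :
    (ann i * ann j + ann j * ann i : Module.End ℝ (F n)) = 0 := by
  refine LinearMap.ext fun y => funext fun t => ?_
  simp only [LinearMap.add_apply, Module.End.mul_apply, LinearMap.zero_apply, ann_apply,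
    Pi.add_apply, Pi.zero_apply]
  rcases eq_or_ne i j with rfl | hij
  · simp [ann_apply, Finset.mem_insert_self]
  by_cases hi : i ∈ t <;> by_cases hj : j ∈ t
  · rw [if_pos hi, if_pos hj, add_zero]
  · simp [hi, hj, Finset.mem_insert_of_mem hi]
  · simp [hi, hj, Finset.mem_insert_of_mem hj]
  · rw [if_neg hi, if_neg hj,
      if_neg (show i ∉ insert j t by simp [Finset.mem_insert, hij, hi]),
      if_neg (show j ∉ insert i t by simp [Finset.mem_insert, hij.symm, hj]),
      sgn_insert j i t hi, sgn_insert i j t hj, Finset.insert_comm]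
    rcases lt_or_gt_of_ne hij with h | h
    · rw [if_neg (asymm h), if_pos h]; ring
    · rw [if_pos h, if_neg (asymm h)]; ring

lemma crt_ann_same (i : Fin n) :
    (crt i * ann i + ann i * crt i : Module.End ℝ (F n)) = 1 := by
  refine LinearMap.ext fun y => funext fun t => ?_
  simp only [LinearMap.add_apply, Module.End.mul_apply, Module.End.one_apply, crt_apply, ann_apply,
    Pi.add_apply]
  by_cases hi : i ∈ t
  · rw [if_pos hi, if_pos hi, if_neg (Finset.notMem_erase i t),
      Finset.insert_erase hi, sgn_erase_self, ← mul_assoc, sgn_sq, one_mul, add_zero]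
  · rw [if_neg hi, if_neg hi, if_pos (Finset.mem_insert_self i t),
      Finset.erase_insert hi, sgn_insert_self i t hi, ← mul_assoc, sgn_sq, one_mul, zero_add]

lemma crt_ann_ne (i j : Fin n) (hij : i ≠ j) :
    (crt i * ann j + ann j * crt i : Module.End ℝ (F n)) = 0 := by
  refine LinearMap.ext fun y => funext fun t => ?_
  simp only [LinearMap.add_apply, Module.End.mul_apply, LinearMap.zero_apply, crt_apply, ann_apply,
    Pi.add_apply, Pi.zero_apply]
  by_cases hi : i ∈ t <;> by_cases hj : j ∈ t
  · rw [if_pos hi, if_pos hj, if_pos (Finset.mem_erase.2 ⟨hij.symm, hj⟩),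
      mul_zero, add_zero]
  · rw [if_pos hi, if_neg hj,
      if_neg (fun h : j ∈ t.erase i => hj (Finset.mem_of_mem_erase h)),
      if_pos (Finset.mem_insert_of_mem hi),
      Finset.erase_insert_of_ne hij.symm,
      sgn_erase j i t hi hij.symm, sgn_insert i j t hj]
    rcases lt_or_gt_of_ne hij with h | h
    · rw [if_neg (asymm h), if_pos h]; ring
    · rw [if_pos h, if_neg (asymm h)]; ring
  · simp [hi, hj]
  · simp [hi, hj, Finset.mem_insert, hij]

section Rep

variable {V : Type*} [AddCommGroup V] [Module ℝ V]
variable (e : Module.Basis (Fin n) ℝ V) (Q : QuadraticForm ℝ V)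

/-- The bilinear form associated to `Q`. -/
def bl : LinearMap.BilinForm ℝ V := QuadraticMap.associated (R := ℝ) Q

lemma bl_self (v : V) : bl Q v v = Q v := QuadraticMap.associated_eq_self_apply ℝ Q v

/-- The Fock representation map on `V`. -/
def pim : V →ₗ[ℝ] Module.End ℝ (F n) :=
  (∑ i : Fin n, (e.coord i).smulRight (crt i)) +
    ∑ j : Fin n, (((bl Q).flip (e j)).smulRight (ann j))

lemma pim_apply (v : V) :
    pim e Q v = (∑ i : Fin n, e.repr v i • crt i) +
      ∑ j : Fin n, bl Q v (e j) • ann j := by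
  simp [pim, LinearMap.sum_apply, LinearMap.smulRight_apply, Module.Basis.coord_apply,
    LinearMap.flip_apply]

lemma sum_pairs_zero {M : Type*} [AddCommGroup M] [Module ℝ M]
    (f : Fin n → Fin n → M) (h : ∀ i j, f i j + f j i = 0) :
    ∑ i : Fin n, ∑ j : Fin n, f i j = 0 := by
  have h2 : (∑ i : Fin n, ∑ j : Fin n, f i j) + (∑ i : Fin n, ∑ j : Fin n, f i j) = 0 := by
    nth_rewrite 2 [show (∑ i : Fin n, ∑ j : Fin n, f i j) = ∑ i : Fin n, ∑ j : Fin n, f j i from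
      Finset.sum_comm]
    rw [← Finset.sum_add_distrib]
    refine Finset.sum_eq_zero fun i _ => ?_
    rw [← Finset.sum_add_distrib]
    exact Finset.sum_eq_zero fun j _ => h i j
  have h3 : (2 : ℝ) • (∑ i : Fin n, ∑ j : Fin n, f i j) = 0 := by
    rw [two_smul]; exact h2
  have := congrArg (fun x => ((2 : ℝ)⁻¹) • x) h3
  simpa [smul_smul] using this

lemma pim_sq (v : V) :
    pim e Q v * pim e Q v = algebraMap ℝ (Module.End ℝ (F n)) (Q v) := by
  set c : Fin n → ℝ := fun i => e.repr v i with hc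
  set b : Fin n → ℝ := fun j => bl Q v (e j) with hb
  rw [pim_apply]
  set X : Module.End ℝ (F n) := ∑ i : Fin n, c i • crt i with hX
  set Y : Module.End ℝ (F n) := ∑ j : Fin n, b j • ann j with hY
  have expand : (X + Y) * (X + Y) = X * X + (X * Y + Y * X) + Y * Y := by noncomm_ring
  have hXX : X * X = 0 := by
    rw [hX, Finset.sum_mul_sum]
    refine sum_pairs_zero _ fun i j => ?_
    rw [smul_mul_smul_comm, smul_mul_smul_comm, mul_comm (c j) (c i), ← smul_add, crt_crt,
      smul_zero]
  have hYY : Y * Y = 0 := by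
    rw [hY, Finset.sum_mul_sum]
    refine sum_pairs_zero _ fun i j => ?_
    rw [smul_mul_smul_comm, smul_mul_smul_comm, mul_comm (b j) (b i), ← smul_add, ann_ann,
      smul_zero]
  have hXY : X * Y + Y * X = (Q v) • (1 : Module.End ℝ (F n)) := by
    rw [hX, hY, Finset.sum_mul_sum, Finset.sum_mul_sum]
    rw [show (∑ j : Fin n, ∑ i : Fin n, (b j • ann j) * (c i • crt i)) =
        ∑ i : Fin n, ∑ j : Fin n, (b j • ann j) * (c i • crt i) from Finset.sum_comm]
    rw [← Finset.sum_add_distrib]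
    have : ∀ i : Fin n, (∑ j : Fin n, (c i • crt i) * (b j • ann j)) +
        (∑ j : Fin n, (b j • ann j) * (c i • crt i)) = (c i * b i) • 1 := by
      intro i
      rw [← Finset.sum_add_distrib]
      have : ∀ j : Fin n, (c i • crt i) * (b j • ann j) + (b j • ann j) * (c i • crt i)
          = if j = i then (c i * b i) • (1 : Module.End ℝ (F n)) else 0 := by
        intro j
        rw [smul_mul_smul_comm, smul_mul_smul_comm, mul_comm (b j) (c i), ← smul_add]
        rcases eq_or_ne j i with rfl | hji
        · rw [crt_ann_same, if_pos rfl]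
        · rw [crt_ann_ne _ _ (Ne.symm hji), smul_zero, if_neg hji]
      rw [Finset.sum_congr rfl fun j _ => this j]
      simp
    rw [Finset.sum_congr rfl fun i _ => this i, ← Finset.sum_smul]
    congr 1
    have hv : ∑ i : Fin n, c i * b i = bl Q v v := by
      have : bl Q v (∑ i : Fin n, c i • e i) = ∑ i : Fin n, c i * b i := by
        rw [map_sum]
        exact Finset.sum_congr rfl fun i _ => by rw [map_smul, smul_eq_mul]
      rw [← this, hc]
      congr 1
      exact e.sum_repr v
    rw [hv, bl_self]
  rw [expand, hXX, hYY, hXY, zero_add, add_zero, Module.algebraMap_end_eq_smul_id]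
  rfl

open CliffordAlgebra in
/-- The Fock representation of the Clifford algebra. -/
def rep : CliffordAlgebra Q →ₐ[ℝ] Module.End ℝ (F n) :=
  CliffordAlgebra.lift Q ⟨pim e Q, pim_sq e Q⟩

lemma rep_ι (v : V) : rep e Q (CliffordAlgebra.ι Q v) = pim e Q v :=
  CliffordAlgebra.lift_ι_apply _ _ _

/-- The vacuum vector. -/
def vac : F n := fun t => if t = ∅ then 1 else 0

/-- Applying the representation to the vacuum, as a linear map. -/
def gm : CliffordAlgebra Q →ₗ[ℝ] F n where
  toFun x := rep e Q x vac
  map_add' x y := by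
    show rep e Q (x + y) vac = _
    rw [map_add, LinearMap.add_apply]
  map_smul' c x := by
    show rep e Q (c • x) vac = _
    rw [map_smul, LinearMap.smul_apply]
    rfl

lemma gm_apply (x : CliffordAlgebra Q) : gm e Q x = rep e Q x vac := rfl

lemma pim_basis (i : Fin n) :
    pim e Q (e i) = crt i + ∑ j : Fin n, bl Q (e i) (e j) • ann j := by
  rw [pim_apply]
  congr 1
  rw [show (∑ k : Fin n, e.repr (e i) k • crt k) =
    ∑ k : Fin n, (if i = k then (1:ℝ) else 0) • crt k from
    Finset.sum_congr rfl fun k _ => by rw [e.repr_self, Finsupp.single_apply]]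
  simp

/-- Key triangularity lemma. -/
lemma key (L : List (Fin n)) (hL : L.Pairwise (· < ·)) :
    (∀ t, ¬ t ⊆ L.toFinset → gm e Q ((L.map fun i => CliffordAlgebra.ι Q (e i)).prod) t = 0) ∧
    gm e Q ((L.map fun i => CliffordAlgebra.ι Q (e i)).prod) L.toFinset = 1 := by
  induction L with
  | nil =>
    constructor
    · intro t ht
      have ht' : t ≠ ∅ := by simpa [Finset.subset_empty] using ht
      simp [gm_apply, vac, ht']
    · simp [gm_apply, vac]
  | cons i L ih =>
    rw [List.pairwise_cons] at hL
    obtain ⟨hlt, hL'⟩ := hL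
    obtain ⟨ih1, ih2⟩ := ih hL'
    simp only [List.toFinset_cons]
    have hiL : i ∉ L.toFinset := fun h => lt_irrefl i (hlt i (List.mem_toFinset.mp h))
    set y : F n := gm e Q ((L.map fun k => CliffordAlgebra.ι Q (e k)).prod) with hy
    have hstep : ∀ t, gm e Q (((i :: L).map fun k => CliffordAlgebra.ι Q (e k)).prod) t
        = (if i ∈ t then sgn i t * y (t.erase i) else 0)
          + ∑ j : Fin n, bl Q (e i) (e j) *
              (if j ∈ t then 0 else sgn j t * y (insert j t)) := by
      intro t
      rw [List.map_cons, List.prod_cons, gm_apply, map_mul, rep_ι, pim_basis]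
      simp only [LinearMap.add_apply, Module.End.mul_apply, Pi.add_apply, LinearMap.sum_apply,
        LinearMap.smul_apply]
      rw [Finset.sum_apply]
      congr 1
    constructor
    · intro t ht
      rw [hstep t]
      have h1 : (if i ∈ t then sgn i t * y (t.erase i) else 0) = 0 := by
        by_cases hi : i ∈ t
        · rw [if_pos hi, ih1 (t.erase i) (fun hsub => ht ?_), mul_zero]
          intro x hx
          rcases Finset.mem_insert.mp (Finset.mem_insert_of_mem hx : x ∈ insert i t) with h | h
          · exact Finset.mem_insert.2 (Or.inl h)
          · by_cases hxi : x = i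
            · exact Finset.mem_insert.2 (Or.inl hxi)
            · exact Finset.mem_insert.2 (Or.inr (hsub (Finset.mem_erase.2 ⟨hxi, hx⟩)))
        · rw [if_neg hi]
      rw [h1, zero_add]
      refine Finset.sum_eq_zero fun j _ => ?_
      by_cases hj : j ∈ t
      · rw [if_pos hj, mul_zero]
      · rw [if_neg hj, ih1 (insert j t) (fun hsub => ht fun x hx =>
          Finset.mem_insert_of_mem (hsub (Finset.mem_insert_of_mem hx))), mul_zero, mul_zero]
    · rw [hstep]
      have hmem : i ∈ insert i L.toFinset := Finset.mem_insert_self i _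
      rw [if_pos hmem, Finset.erase_insert hiL, ih2, mul_one]
      have hsgn : sgn i (insert i L.toFinset) = 1 := by
        rw [sgn]
        convert pow_zero (-1 : ℝ)
        rw [Finset.card_eq_zero, Finset.filter_eq_empty_iff]
        intro x hx
        rcases Finset.mem_insert.mp hx with rfl | h
        · exact lt_irrefl x
        · exact asymm (hlt x (List.mem_toFinset.mp h))
      rw [hsgn]
      have : ∀ j : Fin n, bl Q (e i) (e j) *
          (if j ∈ insert i L.toFinset then 0
            else sgn j (insert i L.toFinset) * y (insert j (insert i L.toFinset))) = 0 := by
        intro j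
        by_cases hj : j ∈ insert i L.toFinset
        · rw [if_pos hj, mul_zero]
        · rw [if_neg hj, ih1 (insert j (insert i L.toFinset))
            (fun hsub => hiL (hsub (Finset.mem_insert_of_mem hmem))), mul_zero, mul_zero]
      rw [Finset.sum_congr rfl fun j _ => this j, Finset.sum_const_zero, add_zero]

/-- The candidate basis family. -/
def fb (s : Finset (Fin n)) : CliffordAlgebra Q :=
  ((s.sort (· ≤ ·)).map fun i => CliffordAlgebra.ι Q (e i)).prod

lemma gm_fb_of_not_subset {s t : Finset (Fin n)} (h : ¬ t ⊆ s) : gm e Q (fb e Q s) t = 0 := by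
  have := (key e Q (s.sort (· ≤ ·)) (Finset.sortedLT_sort s).pairwise).1 t
  rw [Finset.sort_toFinset] at this
  exact this h

lemma gm_fb_self (s : Finset (Fin n)) : gm e Q (fb e Q s) s = 1 := by
  have := (key e Q (s.sort (· ≤ ·)) (Finset.sortedLT_sort s).pairwise).2
  rwa [Finset.sort_toFinset] at this

lemma fb_empty : fb e Q ∅ = 1 := by simp [fb]

lemma fb_singleton (i : Fin n) : fb e Q {i} = CliffordAlgebra.ι Q (e i) := by
  simp [fb, Finset.sort_singleton]

lemma mul_fb_of_lt (j : Fin n) (u : Finset (Fin n)) (h : ∀ k ∈ u, j < k) :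
    CliffordAlgebra.ι Q (e j) * fb e Q u = fb e Q (insert j u) := by
  have hj : j ∉ u := fun hju => lt_irrefl j (h j hju)
  rw [fb, fb, Finset.sort_insert _ (fun b hb => le_of_lt (h b hb)) hj, List.map_cons,
    List.prod_cons]

lemma fb_min_decomp {t : Finset (Fin n)} (ht : t.Nonempty) :
    fb e Q t = CliffordAlgebra.ι Q (e (t.min' ht)) * fb e Q (t.erase (t.min' ht)) := by
  have h : ∀ k ∈ t.erase (t.min' ht), t.min' ht < k := fun k hk =>
    lt_of_le_of_ne (t.min'_le k (Finset.mem_of_mem_erase hk))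
      (Ne.symm (Finset.ne_of_mem_erase hk))
  rw [mul_fb_of_lt e Q _ _ h, Finset.insert_erase (t.min'_mem ht)]

lemma keyK : ∀ (m : ℕ) (t : Finset (Fin n)), t.card ≤ m → ∀ i : Fin n,
    CliffordAlgebra.ι Q (e i) * fb e Q t ∈
      Submodule.span ℝ (fb e Q '' {u | u ⊆ insert i t}) := by
  intro m
  induction m with
  | zero =>
    intro t htc i
    have ht : t = ∅ := Finset.card_eq_zero.mp (Nat.le_zero.mp htc)
    subst ht
    rw [fb_empty, mul_one, ← fb_singleton]
    exact Submodule.subset_span ⟨{i}, by simp, rfl⟩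
  | succ m ih =>
    intro t htc i
    rcases Finset.eq_empty_or_nonempty t with rfl | ht
    · rw [fb_empty, mul_one, ← fb_singleton]
      exact Submodule.subset_span ⟨{i}, by simp, rfl⟩
    set j := t.min' ht with hj
    have hjt : j ∈ t := t.min'_mem ht
    rcases lt_trichotomy i j with hij | hij | hij
    · rw [mul_fb_of_lt e Q i t (fun k hk => lt_of_lt_of_le hij (t.min'_le k hk))]
      exact Submodule.subset_span ⟨insert i t, Set.mem_setOf.2 (subset_refl _), rfl⟩
    · subst hij
      rw [fb_min_decomp e Q ht, ← hj, ← mul_assoc, CliffordAlgebra.ι_sq_scalar,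
        ← Algebra.smul_def]
      exact Submodule.smul_mem _ _ (Submodule.subset_span
        ⟨t.erase j, fun x hx => Finset.mem_insert_of_mem (Finset.mem_of_mem_erase hx), rfl⟩)
    · rw [fb_min_decomp e Q ht, ← hj, ← mul_assoc,
        eq_sub_of_add_eq (CliffordAlgebra.ι_mul_ι_add_swap (e i) (e j)), sub_mul,
        ← Algebra.smul_def, mul_assoc]
      refine Submodule.sub_mem _ (Submodule.smul_mem _ _ (Submodule.subset_span
        ⟨t.erase j, fun x hx => Finset.mem_insert_of_mem (Finset.mem_of_mem_erase hx), rfl⟩)) ?_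
      have hrec := ih (t.erase j) (by
        have := Finset.card_erase_of_mem hjt
        omega) i
      refine Submodule.span_induction (p := fun x _ =>
        CliffordAlgebra.ι Q (e j) * x ∈ Submodule.span ℝ (fb e Q '' {u | u ⊆ insert i t}))
        ?_ ?_ ?_ ?_ hrec
      · rintro x ⟨u, hu, rfl⟩
        have hu' : ∀ k ∈ u, j < k := by
          intro k hk
          rcases Finset.mem_insert.mp (hu hk) with rfl | hk'
          · exact hij
          · exact lt_of_le_of_ne (t.min'_le k (Finset.mem_of_mem_erase hk'))
              (Ne.symm (Finset.ne_of_mem_erase hk'))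
        rw [mul_fb_of_lt e Q j u hu']
        refine Submodule.subset_span ⟨insert j u, ?_, rfl⟩
        intro x hx
        rcases Finset.mem_insert.mp hx with rfl | hx'
        · exact Finset.mem_insert_of_mem hjt
        · rcases Finset.mem_insert.mp (hu hx') with rfl | hx''
          · exact Finset.mem_insert_self x t
          · exact Finset.mem_insert_of_mem (Finset.mem_of_mem_erase hx'')
      · rw [mul_zero]; exact Submodule.zero_mem _
      · intro x y _ _ hx hy
        rw [mul_add]; exact Submodule.add_mem _ hx hy
      · intro a x _ hx
        rw [mul_smul_comm]; exact Submodule.smul_mem _ _ hx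

lemma span_fb_top : Submodule.span ℝ (Set.range (fb e Q)) = ⊤ := by
  rw [eq_top_iff]
  intro x hx
  clear hx
  induction x using CliffordAlgebra.induction with
  | algebraMap r =>
    rw [Algebra.algebraMap_eq_smul_one, ← fb_empty (e := e) (Q := Q)]
    exact Submodule.smul_mem _ _ (Submodule.subset_span ⟨∅, rfl⟩)
  | ι v =>
    have hv : CliffordAlgebra.ι Q v = ∑ i : Fin n, e.repr v i • fb e Q {i} := by
      conv_lhs => rw [← e.sum_repr v]
      rw [map_sum]
      exact Finset.sum_congr rfl fun i _ => by rw [map_smul, fb_singleton]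
    rw [hv]
    exact Submodule.sum_mem _ fun i _ =>
      Submodule.smul_mem _ _ (Submodule.subset_span ⟨{i}, rfl⟩)
  | mul a b ha hb =>
    have hι : ∀ (i : Fin n) (x : CliffordAlgebra Q),
        x ∈ Submodule.span ℝ (Set.range (fb e Q)) →
        CliffordAlgebra.ι Q (e i) * x ∈ Submodule.span ℝ (Set.range (fb e Q)) := by
      intro i x hx
      refine Submodule.span_induction (p := fun x _ =>
        CliffordAlgebra.ι Q (e i) * x ∈ Submodule.span ℝ (Set.range (fb e Q))) ?_ ?_ ?_ ?_ hx
      · rintro x ⟨t, rfl⟩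
        refine Submodule.span_le.mpr ?_ (keyK e Q t.card t le_rfl i)
        rintro _ ⟨u, _, rfl⟩
        exact Submodule.subset_span ⟨u, rfl⟩
      · rw [mul_zero]; exact Submodule.zero_mem _
      · intro x y _ _ hx hy
        rw [mul_add]; exact Submodule.add_mem _ hx hy
      · intro a x _ hx
        rw [mul_smul_comm]; exact Submodule.smul_mem _ _ hx
    have hfbmul : ∀ (m : ℕ) (t : Finset (Fin n)), t.card ≤ m →
        ∀ x ∈ Submodule.span ℝ (Set.range (fb e Q)),
        fb e Q t * x ∈ Submodule.span ℝ (Set.range (fb e Q)) := by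
      intro m
      induction m with
      | zero =>
        intro t htc x hx
        rw [Finset.card_eq_zero.mp (Nat.le_zero.mp htc), fb_empty, one_mul]
        exact hx
      | succ m ihm =>
        intro t htc x hx
        rcases Finset.eq_empty_or_nonempty t with rfl | ht
        · rw [fb_empty, one_mul]; exact hx
        · rw [fb_min_decomp e Q ht, mul_assoc]
          refine hι _ _ (ihm _ ?_ x hx)
          have := Finset.card_erase_of_mem (t.min'_mem ht)
          omega
    refine Submodule.span_induction (p := fun a _ =>
      a * b ∈ Submodule.span ℝ (Set.range (fb e Q))) ?_ ?_ ?_ ?_ ha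
    · rintro _ ⟨t, rfl⟩
      exact hfbmul t.card t le_rfl b hb
    · rw [zero_mul]; exact Submodule.zero_mem _
    · intro x y _ _ hx hy
      rw [add_mul]; exact Submodule.add_mem _ hx hy
    · intro a x _ hx
      rw [smul_mul_assoc]; exact Submodule.smul_mem _ _ hx
  | add a b ha hb => exact Submodule.add_mem _ ha hb

lemma fb_indep : LinearIndependent ℝ (fb e Q) := by
  rw [Fintype.linearIndependent_iff]
  intro c hc
  have h0 : ∀ t : Finset (Fin n), ∑ s : Finset (Fin n), c s * gm e Q (fb e Q s) t = 0 := by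
    intro t
    have h1 := congrArg (gm e Q) hc
    rw [map_sum, map_zero] at h1
    have h2 := congrFun h1 t
    rw [Finset.sum_apply] at h2
    simpa [map_smul] using h2
  have step : ∀ s : Finset (Fin n), (∀ s', s ⊂ s' → c s' = 0) → c s = 0 := by
    intro s hs
    have h := h0 s
    rw [Finset.sum_eq_single s (fun b _ hb => ?_) (fun h => absurd (Finset.mem_univ s) h)] at h
    · rwa [gm_fb_self, mul_one] at h
    · by_cases hsb : s ⊆ b
      · rw [hs b (HasSubset.Subset.ssubset_of_ne hsb (Ne.symm hb)), zero_mul]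
      · rw [gm_fb_of_not_subset e Q hsb, mul_zero]
  have main : ∀ (m : ℕ) (s : Finset (Fin n)), sᶜ.card ≤ m → c s = 0 := by
    intro m
    induction m with
    | zero =>
      intro s hsc
      refine step s fun s' hss' => absurd ?_ (Nat.not_lt_zero s'ᶜ.card)
      calc s'ᶜ.card < sᶜ.card := Finset.card_lt_card (Finset.compl_ssubset_compl.mpr hss')
        _ ≤ 0 := hsc
    | succ m ihm =>
      intro s hsc
      refine step s fun s' hss' => ihm s' ?_
      have := Finset.card_lt_card (Finset.compl_ssubset_compl.mpr hss')
      omega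
  exact fun s => main sᶜ.card s le_rfl

lemma gm_ι (v : V) (k : Fin n) : gm e Q (CliffordAlgebra.ι Q v) {k} = e.repr v k := by
  rw [gm_apply, rep_ι, pim_apply]
  simp only [LinearMap.add_apply, LinearMap.sum_apply, LinearMap.smul_apply, Pi.add_apply]
  rw [Finset.sum_apply, Finset.sum_apply]
  have h1 : ∀ i : Fin n, (e.repr v i • crt i vac) {k} = if i = k then e.repr v i else 0 := by
    intro i
    rw [Pi.smul_apply, smul_eq_mul, crt_apply]
    rcases eq_or_ne i k with rfl | hik
    · rw [if_pos (Finset.mem_singleton_self i), if_pos rfl]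
      have : ({i} : Finset (Fin n)).erase i = ∅ := Finset.erase_singleton i
      rw [this]
      have hsgn : sgn i ({i} : Finset (Fin n)) = 1 := by
        rw [sgn]
        convert pow_zero (-1 : ℝ)
        rw [Finset.card_eq_zero, Finset.filter_eq_empty_iff]
        intro x hx
        rw [Finset.mem_singleton] at hx
        subst hx
        exact lt_irrefl x
      rw [hsgn]
      simp [vac]
    · rw [if_neg (by simp [Finset.mem_singleton, hik]), if_neg hik, mul_zero]
  have h2 : ∀ j : Fin n, (bl Q v (e j) • ann j vac) {k} = 0 := by
    intro j
    rw [Pi.smul_apply, smul_eq_mul, ann_apply]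
    by_cases hj : j ∈ ({k} : Finset (Fin n))
    · rw [if_pos hj, mul_zero]
    · rw [if_neg hj, show vac (insert j {k}) = 0 from
        if_neg (Finset.insert_ne_empty j {k}), mul_zero, mul_zero]
  rw [Finset.sum_congr rfl fun i _ => h1 i, Finset.sum_congr rfl fun j _ => h2 j]
  simp

include e in
lemma ι_inj : Function.Injective (CliffordAlgebra.ι Q (M := V)) := by
  intro v w h
  have h0 : CliffordAlgebra.ι Q (v - w) = 0 := by rw [map_sub, h, sub_self]
  have h1 : ∀ k, e.repr (v - w) k = 0 := by
    intro k
    rw [← gm_ι e Q (v - w) k, h0, map_zero]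
    rfl
  have h2 : e.repr (v - w) = 0 := Finsupp.ext h1
  have h3 : v - w = 0 := by
    have := congrArg e.repr.symm h2
    rwa [LinearEquiv.symm_apply_apply, map_zero] at this
  exact sub_eq_zero.mp h3

end Rep

end

end CliffordBasisAux

open CliffordAlgebra

/-- For a finite-dimensional real vector space `V` of dimension `n` with quadratic form `Φ`,
the canonical map `i : V → Cl(Φ)` is injective and `Cl(Φ)` has dimension `2ⁿ`; moreover,
given a basis `(e₁,…,eₙ)` of `V`, the products `i(e_{i₁})⋯i(e_{i_k})` for
`1 ≤ i₁ < ⋯ < i_k ≤ n` together with `1` (the empty product) form a basis of `Cl(Φ)`. -/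
theorem clifford_dimension_and_basis {V : Type*} [AddCommGroup V] [Module ℝ V]
    {n : ℕ} (e : Module.Basis (Fin n) ℝ V) (Q : QuadraticForm ℝ V) :
    Function.Injective (ι Q) ∧
    Module.finrank ℝ (CliffordAlgebra Q) = 2 ^ n ∧
    ∃ B : Module.Basis (Finset (Fin n)) ℝ (CliffordAlgebra Q),
      ∀ s : Finset (Fin n), B s = ((s.sort (· ≤ ·)).map fun i => ι Q (e i)).prod := by
  have hindep := CliffordBasisAux.fb_indep e Q
  have hspan : ⊤ ≤ Submodule.span ℝ (Set.range (CliffordBasisAux.fb e Q)) :=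
    (CliffordBasisAux.span_fb_top e Q).ge
  let B : Module.Basis (Finset (Fin n)) ℝ (CliffordAlgebra Q) := Module.Basis.mk hindep hspan
  refine ⟨CliffordBasisAux.ι_inj e Q, ?_, B, fun s => ?_⟩
  · rw [Module.finrank_eq_card_basis B, Fintype.card_finset, Fintype.card_fin]
  · rw [Module.Basis.mk_apply]
    rfl
end

section
/- For the nondegenerate negative-definite quadratic form Φ on ℝⁿ, the kernel of the twisted adjoint representation ρ : Γₙ → GL(n, ℝ), ρ(x)(v) = α(x) v x⁻¹, equals ℝ*·1, the set of nonzero scalar multiples of the identity of the Clifford algebra Clₙ. -/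
open CliffordAlgebra

/-- The negative-definite quadratic form `Φ(x₁,…,xₙ) = −(x₁² + ⋯ + xₙ²)` on `ℝⁿ`. -/
noncomputable def negDefQF (n : ℕ) : QuadraticForm ℝ (Fin n → ℝ) :=
  QuadraticMap.weightedSumSquares ℝ (fun _ : Fin n => (-1 : ℝ))

namespace TAKB
variable {n : ℕ}
def sgn (i : Fin n) (S : Finset (Fin n)) : ℝ := (-1 : ℝ) ^ (S.filter (· < i)).card
def tog (i : Fin n) (S : Finset (Fin n)) : Finset (Fin n) :=
  if i ∈ S then S.erase i else insert i S
def σ (i : Fin n) (S : Finset (Fin n)) : ℝ := (if i ∈ S then 1 else -1) * sgn i S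

lemma sgn_insert (i j : Fin n) {S : Finset (Fin n)} (hj : j ∉ S) :
    sgn i (insert j S) = (if j < i then -1 else 1) * sgn i S := by
  rw [sgn, Finset.filter_insert]
  split_ifs with h
  · rw [Finset.card_insert_of_notMem (by simp [hj]), pow_succ, sgn]; ring
  · simp [sgn]

lemma sgn_erase (i j : Fin n) {S : Finset (Fin n)} (hj : j ∈ S) :
    sgn i (S.erase j) = (if j < i then -1 else 1) * sgn i S := by
  conv_rhs => rw [← Finset.insert_erase hj]
  rw [sgn_insert i j (Finset.notMem_erase j S)]
  split_ifs <;> ring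

lemma mem_tog (i j : Fin n) (hij : i ≠ j) (S : Finset (Fin n)) :
    (j ∈ tog i S) ↔ j ∈ S := by
  unfold tog; split_ifs with h <;> simp [Finset.mem_erase, Finset.mem_insert, Ne.symm hij, hij]

lemma sgn_tog (i j : Fin n) (hij : i ≠ j) (S : Finset (Fin n)) :
    sgn j (tog i S) = (if i < j then -1 else 1) * sgn j S := by
  unfold tog
  by_cases h : i ∈ S
  · rw [if_pos h]; exact sgn_erase j i h
  · rw [if_neg h]; exact sgn_insert j i h

lemma σ_mul_σ_tog (i j : Fin n) (hij : i ≠ j) (S : Finset (Fin n)) :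
    σ i S * σ j (tog i S) = -(σ j S * σ i (tog j S)) := by
  unfold σ
  simp only [mem_tog i j hij, mem_tog j i (Ne.symm hij)]
  rw [sgn_tog i j hij, sgn_tog j i (Ne.symm hij)]
  rcases lt_trichotomy i j with h | h | h
  · rw [if_pos h, if_neg (asymm h)]; ring
  · exact absurd h hij
  · rw [if_neg (asymm h), if_pos h]; ring
end TAKB
namespace TAKB
variable {n : ℕ}
abbrev V (n : ℕ) := Finset (Fin n) → ℝ

def Cop (i : Fin n) : V n →ₗ[ℝ] V n where
  toFun f := fun S => σ i S * f (tog i S)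
  map_add' f g := by funext S; simp [mul_add]
  map_smul' c f := by funext S; simp [smul_eq_mul]; ring

lemma Cop_apply (i : Fin n) (f : V n) (S : Finset (Fin n)) :
    Cop i f S = σ i S * f (tog i S) := rfl

lemma tog_tog (i : Fin n) (S : Finset (Fin n)) : tog i (tog i S) = S := by
  unfold tog; split_ifs with h h2 h2 <;>
    simp_all [Finset.insert_erase, Finset.erase_insert]

lemma sgn_tog_self (i : Fin n) (S : Finset (Fin n)) : sgn i (tog i S) = sgn i S := by
  unfold tog
  by_cases h : i ∈ S
  · rw [if_pos h]; simpa using sgn_erase i i h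
  · rw [if_neg h]; simpa using sgn_insert i i h

lemma mem_tog_self (i : Fin n) (S : Finset (Fin n)) : (i ∈ tog i S) ↔ i ∉ S := by
  unfold tog; split_ifs with h <;> simp [h]

lemma σ_mul_σ_tog_self (i : Fin n) (S : Finset (Fin n)) :
    σ i S * σ i (tog i S) = -1 := by
  unfold σ
  simp only [mem_tog_self, sgn_tog_self]
  have : sgn i S * sgn i S = 1 := by
    unfold sgn; rw [← pow_add]; simp [pow_add, neg_one_pow_mul_eq_zero_iff, ← two_mul,
      pow_mul]
  by_cases h : i ∈ S <;> simp [h] <;> nlinarith [this]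

lemma Cop_mul_Cop_self (i : Fin n) : (Cop i * Cop i : Module.End ℝ (V n)) = -1 := by
  refine LinearMap.ext fun f => funext fun S => ?_
  simp only [Module.End.mul_apply, Cop_apply, LinearMap.neg_apply, Module.End.one_apply,
    Pi.neg_apply, tog_tog]
  rw [← mul_assoc, σ_mul_σ_tog_self]; ring

lemma Cop_mul_Cop (i j : Fin n) (hij : i ≠ j) :
    (Cop i * Cop j : Module.End ℝ (V n)) = -(Cop j * Cop i) := by
  refine LinearMap.ext fun f => funext fun S => ?_
  simp only [Module.End.mul_apply, Cop_apply, LinearMap.neg_apply, Pi.neg_apply]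
  have htog : tog j (tog i S) = tog i (tog j S) := by
    unfold tog
    by_cases h1 : i ∈ S <;> by_cases h2 : j ∈ S <;>
      simp_all [mem_tog, Finset.mem_erase, Finset.mem_insert, hij, Ne.symm hij,
        Finset.erase_insert_of_ne, Finset.insert_comm, Finset.erase_right_comm,
        Finset.erase_insert_of_ne (Ne.symm hij)]
  rw [← mul_assoc, ← mul_assoc, htog, σ_mul_σ_tog i j hij S]
  ring
end TAKB
namespace TAKB
variable {n : ℕ}

lemma negQF_apply (v : Fin n → ℝ) : negDefQF n v = -∑ i, v i * v i := by
  simp [negDefQF, QuadraticMap.weightedSumSquares_apply]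

noncomputable def cmap : (Fin n → ℝ) →ₗ[ℝ] Module.End ℝ (V n) where
  toFun v := ∑ i, v i • Cop i
  map_add' v w := by simp [add_smul, Finset.sum_add_distrib]
  map_smul' c v := by simp [Finset.smul_sum, smul_smul]

lemma cmap_sq (v : Fin n → ℝ) :
    (cmap v * cmap v : Module.End ℝ (V n)) = algebraMap ℝ _ (negDefQF n v) := by
  have expand : (cmap v * cmap v : Module.End ℝ (V n)) =
      ∑ i, ∑ j, (v i * v j) • (Cop i * Cop j : Module.End ℝ (V n)) := by
    show (∑ i, v i • Cop i) * (∑ j, v j • Cop j) = _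
    rw [Finset.sum_mul_sum]
    refine Finset.sum_congr rfl fun i _ => Finset.sum_congr rfl fun j _ => ?_
    rw [smul_mul_smul_comm]
  set A : Fin n → Fin n → Module.End ℝ (V n) :=
    fun i j => (v i * v j) • (Cop i * Cop j) with hA
  have pair : ∀ i j, A i j + A j i =
      if i = j then (2 * (v i * v i)) • (Cop i * Cop i : Module.End ℝ (V n)) else 0 := by
    intro i j
    by_cases h : i = j
    · subst h; rw [if_pos rfl, hA]; simp [two_mul, add_smul]
    · rw [if_neg h, hA]
      simp only [Cop_mul_Cop i j h, smul_neg]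
      rw [mul_comm (v i) (v j)]
      exact neg_add_cancel _
  have hdouble : (∑ i, ∑ j, A i j) + (∑ i, ∑ j, A i j) =
      ∑ i, (2 * (v i * v i)) • (Cop i * Cop i : Module.End ℝ (V n)) := by
    have hswap : (∑ i, ∑ j, A i j) = ∑ i, ∑ j, A j i := Finset.sum_comm
    calc (∑ i, ∑ j, A i j) + (∑ i, ∑ j, A i j)
        = (∑ i, ∑ j, A i j) + (∑ i, ∑ j, A j i) := by rw [← hswap]
      _ = ∑ i, ((∑ j, A i j) + (∑ j, A j i)) := by rw [Finset.sum_add_distrib]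
      _ = ∑ i, ∑ j, (A i j + A j i) := by
          refine Finset.sum_congr rfl fun i _ => ?_; rw [Finset.sum_add_distrib]
      _ = ∑ i, ∑ j, (if i = j then
            (2 * (v i * v i)) • (Cop i * Cop i : Module.End ℝ (V n)) else 0) := by
          exact Finset.sum_congr rfl fun i _ => Finset.sum_congr rfl fun j _ => pair i j
      _ = _ := by
          refine Finset.sum_congr rfl fun i _ => ?_
          simp
  have hsum : ∑ i, (2 * (v i * v i)) • (Cop i * Cop i : Module.End ℝ (V n)) =
      ((2:ℝ) * -∑ i, v i * v i) • (1 : Module.End ℝ (V n)) := by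
    calc ∑ i, (2 * (v i * v i)) • (Cop i * Cop i : Module.End ℝ (V n))
        = ∑ i, (-(2 * (v i * v i))) • (1 : Module.End ℝ (V n)) := by
          refine Finset.sum_congr rfl fun i _ => ?_
          rw [Cop_mul_Cop_self, smul_neg, ← neg_smul]
      _ = (∑ i, -(2 * (v i * v i))) • (1 : Module.End ℝ (V n)) := by
          rw [Finset.sum_smul]
      _ = _ := by
          congr 1
          rw [mul_neg, Finset.mul_sum, ← Finset.sum_neg_distrib]
  have h2 : (2:ℝ) • (∑ i, ∑ j, A i j) =
      (2:ℝ) • ((-∑ i, v i * v i) • (1 : Module.End ℝ (V n))) := by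
    rw [two_smul, hdouble, hsum, smul_smul]
  have hX := smul_right_injective (Module.End ℝ (V n)) (two_ne_zero (α := ℝ)) h2
  rw [expand, hX, negQF_apply, Module.algebraMap_end_eq_smul_id]
  rfl

noncomputable def φ : CliffordAlgebra (negDefQF n) →ₐ[ℝ] Module.End ℝ (V n) :=
  CliffordAlgebra.lift _ ⟨cmap, cmap_sq⟩

lemma φ_ι (v : Fin n → ℝ) : φ (CliffordAlgebra.ι (negDefQF n) v) = cmap v :=
  CliffordAlgebra.lift_ι_apply _ _ _

noncomputable def eι (i : Fin n) : CliffordAlgebra (negDefQF n) :=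
  CliffordAlgebra.ι (negDefQF n) (Pi.single i 1)

lemma φ_eι (i : Fin n) : φ (eι i) = Cop i := by
  rw [eι, φ_ι]
  show (∑ j, (Pi.single i 1 : Fin n → ℝ) j • Cop j) = Cop i
  rw [Finset.sum_eq_single i (fun j _ hji => by
    rw [Pi.single_eq_of_ne hji, zero_smul]) (by simp)]
  rw [Pi.single_eq_same, one_smul]
end TAKB
namespace TAKB
variable {n : ℕ}

lemma sgn_of_forall (i : Fin n) {S : Finset (Fin n)} (h : ∀ j ∈ S, ¬ j < i) :
    sgn i S = 1 := by
  have : S.filter (· < i) = ∅ := Finset.filter_eq_empty_iff.mpr h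
  simp [sgn, this]

/-- monomial over a list of indices -/
noncomputable def mono (l : List (Fin n)) : CliffordAlgebra (negDefQF n) :=
  (l.map eι).prod

@[simp] lemma mono_nil : mono ([] : List (Fin n)) = 1 := rfl

lemma mono_cons (i : Fin n) (l : List (Fin n)) : mono (i :: l) = eι i * mono l := by
  simp [mono]

/-- monomial over a finset, in increasing order -/
noncomputable def eT (T : Finset (Fin n)) : CliffordAlgebra (negDefQF n) :=
  mono (T.sort (· ≤ ·))

@[simp] lemma eT_empty : eT (∅ : Finset (Fin n)) = 1 := by simp [eT]

lemma eT_singleton (i : Fin n) : eT ({i} : Finset (Fin n)) = eι i := by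
  rw [eT, Finset.sort_singleton]; simp [mono]

lemma sort_eq_of_sorted {l : List (Fin n)} (h : l.Pairwise (· < ·)) :
    l.toFinset.sort (· ≤ ·) = l :=
  (List.toFinset_sort (· ≤ ·) h.nodup).mpr (h.imp le_of_lt)

lemma eT_toFinset {l : List (Fin n)} (h : l.Pairwise (· < ·)) : eT l.toFinset = mono l := by
  rw [eT, sort_eq_of_sorted h]

lemma eι_sq (i : Fin n) : eι i * eι i = algebraMap ℝ _ (-1 : ℝ) := by
  rw [eι, CliffordAlgebra.ι_sq_scalar]
  congr 1
  rw [negQF_apply]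
  rw [Finset.sum_eq_single i (fun j _ hji => by rw [Pi.single_eq_of_ne hji]; ring) (by simp)]
  simp

lemma eι_anticomm {i j : Fin n} (hij : i ≠ j) : eι i * eι j = -(eι j * eι i) := by
  have hpolar : QuadraticMap.polar (negDefQF n) (Pi.single i 1) (Pi.single j 1) = 0 := by
    rw [QuadraticMap.polar]
    rw [negQF_apply, negQF_apply, negQF_apply]
    have : ∀ k, ((Pi.single i 1 + Pi.single j 1 : Fin n → ℝ) k) *
        ((Pi.single i 1 + Pi.single j 1 : Fin n → ℝ) k) =
        (Pi.single i 1 : Fin n → ℝ) k * (Pi.single i 1 : Fin n → ℝ) k +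
        (Pi.single j 1 : Fin n → ℝ) k * (Pi.single j 1 : Fin n → ℝ) k := by
      intro k
      simp only [Pi.add_apply, Pi.single_apply]
      by_cases h1 : k = i <;> by_cases h2 : k = j
      · exact absurd (h1.symm.trans h2) hij
      · rw [if_pos h1, if_neg h2]; ring
      · rw [if_pos h2, if_neg h1]; ring
      · rw [if_neg h1, if_neg h2]; ring
    rw [Finset.sum_congr rfl fun k _ => this k, Finset.sum_add_distrib]
    ring
  have := CliffordAlgebra.ι_mul_ι_add_swap (Q := negDefQF n) (Pi.single i 1) (Pi.single j 1)
  rw [hpolar, map_zero] at this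
  rw [eι, eι]
  exact eq_neg_of_add_eq_zero_left this

/-- Key lemma 1, list form -/
lemma key1_list : ∀ (l : List (Fin n)), l.Pairwise (· < ·) → ∀ i,
    eι i * mono l =
      ((if i ∈ l.toFinset then (-1:ℝ) else 1) * sgn i l.toFinset) • eT (tog i l.toFinset) := by
  intro l
  induction l with
  | nil =>
    intro _ i
    rw [List.toFinset_nil, mono_nil, mul_one]
    rw [if_neg (Finset.notMem_empty i), sgn_of_forall i (by simp), one_mul, one_smul]
    simp only [tog, if_neg (Finset.notMem_empty i), LawfulSingleton.insert_empty_eq]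
    exact (eT_singleton i).symm
  | cons j l' ih =>
    intro hs i
    have hj : ∀ b ∈ l'.toFinset, j < b := fun b hb =>
      (List.pairwise_cons.mp hs).1 b (List.mem_toFinset.mp hb)
    have hs' : l'.Pairwise (· < ·) := (List.pairwise_cons.mp hs).2
    have hjT' : j ∉ l'.toFinset := fun h => lt_irrefl j (hj j h)
    set T' := l'.toFinset with hT'
    have hTF : (j :: l').toFinset = insert j T' := by simp [hT']
    rw [hTF]
    rcases eq_or_ne i j with rfl | hij
    · -- i = j
      rw [mono_cons, ← mul_assoc, eι_sq, if_pos (Finset.mem_insert_self i T')]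
      rw [sgn_of_forall i (by
        intro b hb
        rcases Finset.mem_insert.mp hb with rfl | hb
        · exact lt_irrefl b
        · exact asymm (hj b hb))]
      simp only [tog, if_pos (Finset.mem_insert_self i T'), Finset.erase_insert hjT']
      rw [eT_toFinset hs', Algebra.smul_def]
      norm_num
    · rcases lt_or_gt_of_ne hij with hlt | hgt
      · -- i < j : i smaller than everything
        have hiT : i ∉ insert j T' := by
          intro h
          rcases Finset.mem_insert.mp h with rfl | h
          · exact hij rfl
          · exact lt_asymm hlt (hj i h)
        rw [if_neg hiT, sgn_of_forall i (by
          intro b hb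
          rcases Finset.mem_insert.mp hb with rfl | hb
          · exact asymm hlt
          · exact asymm (lt_trans hlt (hj b hb)))]
        rw [one_mul, one_smul]
        simp only [tog, if_neg hiT]
        rw [eT]
        rw [Finset.sort_insert (· ≤ ·) (fun b hb => by
          rcases Finset.mem_insert.mp hb with rfl | hb
          · exact le_of_lt hlt
          · exact le_of_lt (lt_trans hlt (hj b hb))) hiT]
        rw [← hTF, sort_eq_of_sorted hs, mono_cons i (j :: l')]
      · -- j < i
        set W := tog i T' with hW
        have hiT'mem : (i ∈ insert j T') ↔ (i ∈ T') := by
          simp [Finset.mem_insert, hij]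
        have hjW : j ∉ W := by
          rw [hW]; simp only [tog]
          split_ifs with h
          · exact fun hc => hjT' (Finset.mem_of_mem_erase hc)
          · intro hc
            rcases Finset.mem_insert.mp hc with h' | h'
            · exact hij h'.symm
            · exact hjT' h'
        have hjWlt : ∀ b ∈ W, j < b := by
          intro b hb
          rw [hW] at hb; simp only [tog] at hb
          split_ifs at hb with h
          · exact hj b (Finset.mem_of_mem_erase hb)
          · rcases Finset.mem_insert.mp hb with rfl | hb
            · exact hgt
            · exact hj b hb
        have h1 : eι j * eT W = eT (insert j W) := by
          rw [eT, eT, Finset.sort_insert (· ≤ ·) (fun b hb => le_of_lt (hjWlt b hb)) hjW, mono_cons]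
        have h2 : tog i (insert j T') = insert j W := by
          simp only [tog, hW]
          by_cases h : i ∈ T'
          · rw [if_pos h, if_pos (Finset.mem_insert_of_mem h),
              Finset.erase_insert_of_ne (Ne.symm hij)]
          · rw [if_neg h, if_neg (by simp [Finset.mem_insert, hij, h]), Finset.insert_comm]
        have h3 : sgn i (insert j T') = -sgn i T' := by
          rw [sgn_insert i j hjT', if_pos hgt]; ring
        rw [mono_cons, ← mul_assoc, eι_anticomm (Ne.symm (Ne.symm hij)), neg_mul, mul_assoc,
          ih hs' i, mul_smul_comm, h1, h2, h3]
        rw [← neg_smul]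
        congr 1
        simp only [hiT'mem]
        by_cases h : i ∈ T' <;> simp [h] <;> ring

lemma key1 (i : Fin n) (T : Finset (Fin n)) :
    eι i * eT T = ((if i ∈ T then (-1:ℝ) else 1) * sgn i T) • eT (tog i T) := by
  have h := key1_list (T.sort (· ≤ ·)) ((Finset.sortedLT_sort T).pairwise) i
  rwa [Finset.sort_toFinset] at h

end TAKB
namespace TAKB
variable {n : ℕ}

lemma tog_of_not_mem {j : Fin n} {S : Finset (Fin n)} (h : j ∉ S) : tog j S = insert j S := by
  simp only [tog, if_neg h]

lemma tog_of_mem {j : Fin n} {S : Finset (Fin n)} (h : j ∈ S) : tog j S = S.erase j := by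
  simp only [tog, if_pos h]

lemma sgn_insert_self (i : Fin n) {S : Finset (Fin n)} (hi : i ∉ S) :
    sgn i (insert i S) = sgn i S := by
  rw [sgn_insert i i hi, if_neg (lt_irrefl i), one_mul]

/-- Key lemma 2, list form -/
lemma key2_list : ∀ (l : List (Fin n)), l.Pairwise (· < ·) → ∀ i,
    mono l * eι i =
      (((-1:ℝ) ^ l.length) * sgn i l.toFinset) • eT (tog i l.toFinset) := by
  intro l
  induction l with
  | nil =>
    intro _ i
    simp only [List.toFinset_nil, mono_nil, one_mul, List.length_nil, pow_zero]
    rw [sgn_of_forall i (by simp), one_smul]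
    simp only [tog, if_neg (Finset.notMem_empty i), LawfulSingleton.insert_empty_eq]
    exact (eT_singleton i).symm
  | cons j l' ih =>
    intro hs i
    have hj : ∀ b ∈ l'.toFinset, j < b := fun b hb =>
      (List.pairwise_cons.mp hs).1 b (List.mem_toFinset.mp hb)
    have hs' : l'.Pairwise (· < ·) := (List.pairwise_cons.mp hs).2
    have hjT' : j ∉ l'.toFinset := fun h => lt_irrefl j (hj j h)
    set T' := l'.toFinset with hT'
    have hTF : (j :: l').toFinset = insert j T' := by simp [hT']
    rw [hTF, mono_cons, mul_assoc, ih hs' i, mul_smul_comm, key1 j (tog i T')]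
    rw [smul_smul, List.length_cons]
    rcases eq_or_ne i j with rfl | hij
    · -- i = j : tog i T' = insert i T', i ∈ it
      have htog : tog i T' = insert i T' := by simp only [tog, if_neg hjT']
      have hmem : i ∈ tog i T' := htog ▸ Finset.mem_insert_self i T'
      rw [if_pos hmem]
      have hsgnT' : sgn i T' = 1 := sgn_of_forall i fun b hb => asymm (hj b hb)
      have hsgn2 : sgn i (tog i T') = 1 := by
        rw [htog, sgn_insert_self i hjT', hsgnT']
      have htog2 : tog i (tog i T') = T' := tog_tog i T'
      rw [htog2, hsgn2, hsgnT']
      have hmemiT : i ∈ insert i T' := Finset.mem_insert_self i T'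
      have : tog i (insert i T') = T' := by
        simp only [tog, if_pos hmemiT, Finset.erase_insert hjT']
      rw [this]
      have : sgn i (insert i T') = 1 := by rw [sgn_insert_self i hjT', hsgnT']
      rw [this]
      rw [pow_succ]
      ring_nf
    · -- i ≠ j
      have hjtog : j ∉ tog i T' := by
        simp only [tog]; split_ifs with h
        · exact fun hc => hjT' (Finset.mem_of_mem_erase hc)
        · intro hc
          rcases Finset.mem_insert.mp hc with h' | h'
          · exact hij h'.symm
          · exact hjT' h'
      rw [if_neg hjtog]
      have htogji : tog j (tog i T') = insert j (tog i T') := tog_of_not_mem hjtog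
      have htogiT : tog i (insert j T') = insert j (tog i T') := by
        simp only [tog]
        by_cases h : i ∈ T'
        · rw [if_pos h, if_pos (by simp [Finset.mem_insert, hij, h]),
            Finset.erase_insert_of_ne (Ne.symm hij)]
        · rw [if_neg h, if_neg (by simp [Finset.mem_insert, hij, h]), Finset.insert_comm]
      rw [htogji, htogiT]
      congr 1
      -- scalar identity
      have hsgniT : sgn i (insert j T') = (if j < i then (-1:ℝ) else 1) * sgn i T' :=
        sgn_insert i j hjT'
      have hsgnjW : sgn j (tog i T') = (if j < i then (1:ℝ) else -1) := by
        simp only [tog]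
        by_cases h : i ∈ T'
        · rw [if_pos h, if_pos (hj i h)]
          exact sgn_of_forall j fun b hb => asymm (hj b (Finset.mem_of_mem_erase hb))
        · rw [if_neg h, sgn_insert j i h,
            sgn_of_forall j fun b hb => asymm (hj b hb), mul_one]
          rcases lt_or_gt_of_ne hij with hlt | hgt
          · rw [if_pos hlt, if_neg (asymm hlt)]
          · rw [if_neg (asymm hgt), if_pos hgt]
      rw [hsgniT, hsgnjW]
      by_cases h : j < i <;> simp [h, pow_succ] <;> ring

lemma key2 (i : Fin n) (T : Finset (Fin n)) :
    eT T * eι i = (((-1:ℝ) ^ T.card) * sgn i T) • eT (tog i T) := by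
  have h := key2_list (T.sort (· ≤ ·)) ((Finset.sortedLT_sort T).pairwise) i
  rwa [Finset.sort_toFinset, Finset.length_sort] at h

lemma involute_mono (l : List (Fin n)) :
    CliffordAlgebra.involute (mono l) = ((-1:ℝ) ^ l.length) • mono l := by
  induction l with
  | nil => simp
  | cons j l' ih =>
    rw [mono_cons, map_mul, ih, eι, CliffordAlgebra.involute_ι, mul_smul_comm,
      List.length_cons, pow_succ, ← eι, neg_mul, smul_neg, ← neg_smul]
    congr 1
    ring

lemma involute_eT (T : Finset (Fin n)) :
    CliffordAlgebra.involute (eT T) = ((-1:ℝ) ^ T.card) • eT T := by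
  rw [eT, involute_mono, Finset.length_sort]

/-- delta function -/
def δ (T : Finset (Fin n)) : V n := fun S => if S = T then 1 else 0

lemma Cop_δ (j : Fin n) (T : Finset (Fin n)) :
    Cop j (δ T) = ((if j ∈ T then (-1:ℝ) else 1) * sgn j T) • δ (tog j T) := by
  funext S
  rw [Cop_apply]
  show σ j S * δ T (tog j S) = ((if j ∈ T then (-1:ℝ) else 1) * sgn j T) * δ (tog j T) S
  by_cases h : S = tog j T
  · subst h
    show σ j (tog j T) * δ T (tog j (tog j T)) = _ * δ (tog j T) (tog j T)
    rw [tog_tog]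
    have h1 : δ T T = 1 := if_pos rfl
    have h2 : δ (tog j T) (tog j T) = 1 := if_pos rfl
    rw [h1, h2, mul_one, mul_one]
    unfold σ
    simp only [mem_tog_self, sgn_tog_self]
    by_cases hm : j ∈ T <;> simp [hm]
  · have h1 : δ T (tog j S) = 0 := if_neg (fun hc => h (by rw [← hc, tog_tog]))
    have h2 : δ (tog j T) S = 0 := if_neg h
    rw [h1, h2, mul_zero, mul_zero]

lemma φ_eT_vac (T : Finset (Fin n)) : φ (eT T) (δ ∅) = δ T := by
  suffices h : ∀ l : List (Fin n), l.Pairwise (· < ·) → φ (mono l) (δ ∅) = δ l.toFinset by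
    have := h (T.sort (· ≤ ·)) ((Finset.sortedLT_sort T).pairwise)
    rwa [Finset.sort_toFinset] at this
  intro l
  induction l with
  | nil => intro _; simp [mono]
  | cons j l' ih =>
    intro hs
    have hj : ∀ b ∈ l'.toFinset, j < b := fun b hb =>
      (List.pairwise_cons.mp hs).1 b (List.mem_toFinset.mp hb)
    have hs' : l'.Pairwise (· < ·) := (List.pairwise_cons.mp hs).2
    have hjT' : j ∉ l'.toFinset := fun h => lt_irrefl j (hj j h)
    rw [mono_cons, map_mul, Module.End.mul_apply, ih hs', φ_eι, Cop_δ,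
      if_neg hjT', sgn_of_forall j (fun b hb => asymm (hj b hb)), one_mul, one_smul]
    congr 1
    · simp only [tog, if_neg hjT', List.toFinset_cons]
end TAKB
namespace TAKB
variable {n : ℕ}

lemma tog_involutive (i : Fin n) : Function.Involutive (tog i) := tog_tog i

noncomputable def γ : V n →ₗ[ℝ] CliffordAlgebra (negDefQF n) where
  toFun f := ∑ T, f T • eT T
  map_add' f g := by simp [add_smul, Finset.sum_add_distrib]
  map_smul' c f := by simp [Finset.smul_sum, smul_smul]

lemma γ_apply (f : V n) : γ f = ∑ T, f T • eT T := rfl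

lemma γ_Cop (i : Fin n) (g : V n) : γ (Cop i g) = eι i * γ g := by
  rw [γ_apply, γ_apply, Finset.mul_sum]
  have hstep : ∀ S : Finset (Fin n),
      g S • (eι i * eT S) =
        (σ i (tog i S) * g (tog i (tog i S))) • eT (tog i S) := by
    intro S
    rw [key1, tog_tog, smul_smul]
    congr 1
    unfold σ
    simp only [mem_tog_self, sgn_tog_self]
    by_cases h : i ∈ S <;> simp [h] <;> ring
  calc ∑ S, (Cop i g) S • eT S
      = ∑ S, (σ i S * g (tog i S)) • eT S := rfl
    _ = ∑ S, g S • (eι i * eT S) := by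
        refine (Fintype.sum_equiv ((tog_involutive i).toPerm _) _ _ ?_).symm
        intro S
        exact hstep S
    _ = _ := by
        refine Finset.sum_congr rfl fun S _ => ?_
        rw [mul_smul_comm]

lemma ι_eq_sum (v : Fin n → ℝ) :
    CliffordAlgebra.ι (negDefQF n) v = ∑ i, v i • eι i := by
  have hv : v = ∑ i, Pi.single i (v i) := (Finset.univ_sum_single v).symm
  conv_lhs => rw [hv]
  rw [map_sum]
  refine Finset.sum_congr rfl fun i _ => ?_
  rw [eι, ← map_smul]
  congr 1
  funext k
  by_cases h : k = i <;> simp [Pi.single_apply, h]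

lemma master : ∀ (y : CliffordAlgebra (negDefQF n)) (g : V n), γ (φ y g) = y * γ g := by
  intro y
  induction y using CliffordAlgebra.induction with
  | algebraMap r =>
    intro g
    rw [AlgHom.commutes, Module.algebraMap_end_apply, map_smul, Algebra.smul_def]
  | ι v =>
    intro g
    rw [φ_ι]
    have h1 : cmap v g = ∑ i, v i • Cop i g := by
      show (∑ i, v i • Cop i) g = _
      rw [LinearMap.sum_apply]
      exact Finset.sum_congr rfl fun i _ => rfl
    rw [h1, map_sum, ι_eq_sum v, Finset.sum_mul]
    refine Finset.sum_congr rfl fun i _ => ?_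
    rw [map_smul, γ_Cop, smul_mul_assoc]
  | mul a b ha hb =>
    intro g
    rw [map_mul, Module.End.mul_apply, ha, hb, mul_assoc]
  | add a b ha hb =>
    intro g
    rw [map_add, LinearMap.add_apply, map_add, ha, hb, add_mul]

lemma γ_δ (T : Finset (Fin n)) : γ (δ T) = eT T := by
  rw [γ_apply]
  rw [Finset.sum_eq_single T (fun U _ hUT => by
    rw [show δ T U = 0 from if_neg hUT, zero_smul]) (by simp)]
  rw [show δ T T = 1 from if_pos rfl, one_smul]

/-- extraction of coefficients -/
lemma extraction (c : Finset (Fin n) → ℝ) (U : Finset (Fin n) → Finset (Fin n))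
    (hU : Function.Injective U)
    (h : ∑ T, c T • eT (U T) = 0) : ∀ T, c T = 0 := by
  intro T₀
  have h2 := congrArg (fun z => φ z (δ ∅) (U T₀)) h
  simp only [map_zero, LinearMap.zero_apply] at h2
  rw [map_sum] at h2
  have h3 : (((∑ T, c T • φ (eT (U T))) (δ ∅)) (U T₀) : ℝ) = 0 := by
    have : ∑ T, φ (c T • eT (U T)) = ∑ T, c T • φ (eT (U T)) :=
      Finset.sum_congr rfl fun T _ => map_smul φ _ _
    rw [← this]
    exact h2
  rw [LinearMap.sum_apply] at h3
  rw [Finset.sum_apply] at h3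
  have h4 : ∀ T, ((c T • φ (eT (U T))) (δ ∅)) (U T₀) = c T * δ (U T) (U T₀) := by
    intro T
    rw [LinearMap.smul_apply, φ_eT_vac]
    rfl
  rw [Finset.sum_congr rfl fun T _ => h4 T] at h3
  rw [Finset.sum_eq_single T₀ (fun U' _ hUT => by
    rw [show δ (U U') (U T₀) = 0 from if_neg (fun hc => hUT ((hU hc).symm)), mul_zero])
    (by simp)] at h3
  rw [show δ (U T₀) (U T₀) = 1 from if_pos rfl, mul_one] at h3
  exact h3
end TAKB

namespace TAKB
variable {n : ℕ}
lemma sgn_ne_zero (i : Fin n) (S : Finset (Fin n)) : sgn i S ≠ 0 := by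
  simp [sgn, pow_ne_zero]
end TAKB

/-- For the negative-definite form on `ℝⁿ`, the kernel of the twisted adjoint
representation `ρ : Γₙ → GL(n, ℝ)`, `ρ(x)(v) = α(x) v x⁻¹`, is exactly `ℝ*·1`:
an element `x` of the Clifford group `Γₙ` acts trivially on `ℝⁿ` iff it is a nonzero
scalar multiple of `1`. -/
theorem twisted_adjoint_kernel (n : ℕ) (x : (CliffordAlgebra (negDefQF n))ˣ)
    (hx : ∀ v : Fin n → ℝ,
      involute (x : CliffordAlgebra (negDefQF n)) * ι (negDefQF n) v * ↑x⁻¹ ∈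
        Set.range (ι (negDefQF n))) :
    (∀ v : Fin n → ℝ,
        involute (x : CliffordAlgebra (negDefQF n)) * ι (negDefQF n) v * ↑x⁻¹ =
          ι (negDefQF n) v) ↔
      ∃ c : ℝ, c ≠ 0 ∧
        (x : CliffordAlgebra (negDefQF n)) = algebraMap ℝ (CliffordAlgebra (negDefQF n)) c := by
  classical
  constructor
  · intro h
    have h' : ∀ v : Fin n → ℝ,
        involute (x : CliffordAlgebra (negDefQF n)) * ι (negDefQF n) v =
          ι (negDefQF n) v * ↑x := by
      intro v
      have h2 := congrArg (· * (↑x : CliffordAlgebra (negDefQF n))) (h v)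
      rwa [mul_assoc, Units.inv_mul, mul_one] at h2
    set f : TAKB.V n := TAKB.φ (x : CliffordAlgebra (negDefQF n)) (TAKB.δ ∅) with hf
    have hxf : (↑x : CliffordAlgebra (negDefQF n)) = TAKB.γ f := by
      have hm := TAKB.master (x : CliffordAlgebra (negDefQF n)) (TAKB.δ ∅)
      rw [TAKB.γ_δ, TAKB.eT_empty, mul_one] at hm
      exact hm.symm
    have hzero : ∀ T : Finset (Fin n), T ≠ ∅ → f T = 0 := by
      intro T hT
      obtain ⟨i, hi⟩ := Finset.nonempty_iff_ne_empty.mpr hT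
      have heq : involute (TAKB.γ f) * TAKB.eι i = TAKB.eι i * TAKB.γ f := by
        have := h' (Pi.single i 1)
        rw [hxf] at this
        exact this
      have hL : involute (TAKB.γ f) * TAKB.eι i
          = ∑ T, (f T * TAKB.sgn i T) • TAKB.eT (TAKB.tog i T) := by
        rw [TAKB.γ_apply, map_sum, Finset.sum_mul]
        refine Finset.sum_congr rfl fun T _ => ?_
        rw [map_smul, TAKB.involute_eT, smul_smul, smul_mul_assoc, TAKB.key2, smul_smul]
        congr 1
        have h11 : ((-1:ℝ) ^ T.card) * ((-1:ℝ) ^ T.card) = 1 := by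
          rw [← pow_add, ← two_mul, pow_mul]
          norm_num
        linear_combination f T * TAKB.sgn i T * h11
      have hR : TAKB.eι i * TAKB.γ f
          = ∑ T, (f T * ((if i ∈ T then (-1:ℝ) else 1) * TAKB.sgn i T)) •
              TAKB.eT (TAKB.tog i T) := by
        rw [TAKB.γ_apply, Finset.mul_sum]
        refine Finset.sum_congr rfl fun T _ => ?_
        rw [mul_smul_comm, TAKB.key1, smul_smul]
      have hdiff : ∑ T, ((f T * TAKB.sgn i T)
          - (f T * ((if i ∈ T then (-1:ℝ) else 1) * TAKB.sgn i T))) •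
            TAKB.eT (TAKB.tog i T) = 0 := by
        simp only [sub_smul]
        rw [Finset.sum_sub_distrib, ← hL, ← hR, heq, sub_self]
      have hext := TAKB.extraction _ (TAKB.tog i) (TAKB.tog_involutive i).injective hdiff T
      rw [if_pos hi] at hext
      have h2 : (2:ℝ) * (f T * TAKB.sgn i T) = 0 := by linear_combination hext
      have h3 : f T * TAKB.sgn i T = 0 := by linarith
      rcases mul_eq_zero.mp h3 with h4 | h4
      · exact h4
      · exact absurd h4 (TAKB.sgn_ne_zero i T)
    have hx0 : (↑x : CliffordAlgebra (negDefQF n)) = algebraMap ℝ _ (f ∅) := by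
      rw [hxf, TAKB.γ_apply]
      rw [Finset.sum_eq_single ∅ (fun T _ hT => by rw [hzero T hT, zero_smul]) (by simp)]
      rw [TAKB.eT_empty, Algebra.algebraMap_eq_smul_one]
    refine ⟨f ∅, ?_, hx0⟩
    intro hc
    rw [hc, map_zero] at hx0
    have h1 : (1 : CliffordAlgebra (negDefQF n)) = 0 := by
      rw [← Units.mul_inv x, hx0, zero_mul]
    have h2 : TAKB.φ (1 : CliffordAlgebra (negDefQF n)) (TAKB.δ ∅) ∅
        = TAKB.φ (0 : CliffordAlgebra (negDefQF n)) (TAKB.δ ∅) ∅ := by rw [h1]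
    rw [map_one, map_zero] at h2
    have h3 : (1:ℝ) = 0 := by simpa [TAKB.δ] using h2
    exact one_ne_zero h3
  · rintro ⟨c, hc0, hxc⟩ v
    rw [hxc, AlgHom.commutes, Algebra.commutes c (ι (negDefQF n) v), mul_assoc, ← hxc,
      Units.mul_inv, mul_one]
end

section
/- For every x in the Clifford group Γ(Φ) of a nondegenerate quadratic form Φ, the norm N(x) = x·x̄ lies in ℝ*·1, where x̄ = t(α(x)) is the conjugate of x. -/
open CliffordAlgebra

section Auxiliary

variable {V : Type*} [AddCommGroup V] [Module ℝ V]

/-- Twisted Leibniz rule for left contraction. -/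
lemma contract_mul (Q : QuadraticForm ℝ V) (f : Module.Dual ℝ V) (x : CliffordAlgebra Q) :
    ∀ y : CliffordAlgebra Q, contractLeft f (x * y) =
      contractLeft f x * y + involute x * contractLeft f y := by
  induction x using CliffordAlgebra.induction with
  | algebraMap r =>
      intro y
      simp [contractLeft_algebraMap_mul, contractLeft_algebraMap, Algebra.smul_def]
  | ι v =>
      intro y
      rw [contractLeft_ι_mul, contractLeft_ι, involute_ι, Algebra.smul_def]
      noncomm_ring
  | mul a b ha hb =>
      intro y
      rw [mul_assoc, ha, hb, ha]
      simp only [map_mul]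
      noncomm_ring
  | add a b ha hb =>
      intro y
      simp only [add_mul, map_add, ha, hb, map_add]
      abel

/-- The twisted commutator with a vector is contraction with the polar form. -/
lemma ι_mul_sub_involute (Q : QuadraticForm ℝ V) (v : V) (y : CliffordAlgebra Q) :
    ι Q v * y - involute y * ι Q v = contractLeft (Q.polarBilin v) y := by
  induction y using CliffordAlgebra.induction with
  | algebraMap r => simp [Algebra.commutes, contractLeft_algebraMap]
  | ι w =>
      rw [contractLeft_ι, involute_ι, QuadraticMap.polarBilin_apply_apply,
        ← CliffordAlgebra.ι_mul_ι_add_swap]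
      noncomm_ring
  | mul a b ha hb =>
      rw [contract_mul, ← ha, ← hb]
      simp only [map_mul]
      noncomm_ring
  | add a b ha hb =>
      simp only [map_add, add_mul, mul_add, ← ha, ← hb]
      noncomm_ring

/-- Contraction kills elements of the subalgebra generated by vectors annihilated by `f`. -/
lemma contract_adjoin_eq_zero (Q : QuadraticForm ℝ V) (s : Set V) (f : Module.Dual ℝ V) (hf : ∀ v ∈ s, f v = 0)
    {a : CliffordAlgebra Q} (ha : a ∈ Algebra.adjoin ℝ (ι Q '' s)) :
    contractLeft f a = 0 := by
  induction ha using Algebra.adjoin_induction with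
  | mem x hx =>
      obtain ⟨v, hv, rfl⟩ := hx
      rw [contractLeft_ι, hf v hv, map_zero]
  | algebraMap r => exact CliffordAlgebra.contractLeft_algebraMap (Q := Q) f r
  | add x y _ _ hx hy => rw [map_add, hx, hy, add_zero]
  | mul x y _ _ hx hy => rw [contract_mul, hx, hy, zero_mul, mul_zero, add_zero]

/-- The subalgebra generated by vectors is closed under `involute`. -/
lemma involute_adjoin_mem (Q : QuadraticForm ℝ V) (s : Set V) {a : CliffordAlgebra Q}
    (ha : a ∈ Algebra.adjoin ℝ (ι Q '' s)) :
    involute a ∈ Algebra.adjoin ℝ (ι Q '' s) := by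
  induction ha using Algebra.adjoin_induction with
  | mem x hx =>
      obtain ⟨v, hv, rfl⟩ := hx
      rw [involute_ι]
      exact neg_mem (Algebra.subset_adjoin ⟨v, hv, rfl⟩)
  | algebraMap r => simp only [AlgHom.commutes]; exact algebraMap_mem _ r
  | add x y _ _ hx hy => rw [map_add]; exact add_mem hx hy
  | mul x y _ _ hx hy => rw [map_mul]; exact mul_mem hx hy

/-- An orthogonal vector twisted-commutes with the subalgebra generated by the others. -/
lemma ι_mul_adjoin (Q : QuadraticForm ℝ V) (s : Set V) (u : V) (hu : ∀ v ∈ s, QuadraticMap.polar Q u v = 0)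
    {a : CliffordAlgebra Q} (ha : a ∈ Algebra.adjoin ℝ (ι Q '' s)) :
    ι Q u * a = involute a * ι Q u := by
  induction ha using Algebra.adjoin_induction with
  | mem x hx =>
      obtain ⟨v, hv, rfl⟩ := hx
      rw [involute_ι, neg_mul]
      have := CliffordAlgebra.ι_mul_ι_add_swap (Q := Q) u v
      rw [hu v hv, map_zero] at this
      linear_combination (norm := noncomm_ring) this
  | algebraMap r => simp only [AlgHom.commutes]; rw [Algebra.commutes]
  | add x y _ _ hx hy => rw [mul_add, map_add, add_mul, hx, hy]
  | mul x y _ _ hx hy => rw [← mul_assoc, hx, mul_assoc, hy, map_mul, mul_assoc]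

/-- Decomposition of the subalgebra generated by one more orthogonal vector. -/
lemma adjoin_insert_decompose (Q : QuadraticForm ℝ V) (s : Set V) (u : V)
    (hu : ∀ v ∈ s, QuadraticMap.polar Q u v = 0)
    {z : CliffordAlgebra Q} (hz : z ∈ Algebra.adjoin ℝ (ι Q '' insert u s)) :
    ∃ a b, a ∈ Algebra.adjoin ℝ (ι Q '' s) ∧ b ∈ Algebra.adjoin ℝ (ι Q '' s) ∧
      z = a + ι Q u * b := by
  induction hz using Algebra.adjoin_induction with
  | mem x hx =>
      obtain ⟨v, hv, rfl⟩ := hx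
      rcases hv with rfl | hv
      · exact ⟨0, 1, zero_mem _, one_mem _, by rw [mul_one, zero_add]⟩
      · exact ⟨ι Q v, 0, Algebra.subset_adjoin ⟨v, hv, rfl⟩, zero_mem _,
          by rw [mul_zero, add_zero]⟩
  | algebraMap r =>
      exact ⟨algebraMap ℝ _ r, 0, algebraMap_mem _ r, zero_mem _, by rw [mul_zero, add_zero]⟩
  | add x y _ _ hx hy =>
      obtain ⟨a, b, ha, hb, rfl⟩ := hx
      obtain ⟨a', b', ha', hb', rfl⟩ := hy
      exact ⟨a + a', b + b', add_mem ha ha', add_mem hb hb', by noncomm_ring⟩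
  | mul x y _ _ hx hy =>
      obtain ⟨a, b, ha, hb, rfl⟩ := hx
      obtain ⟨a', b', ha', hb', rfl⟩ := hy
      refine ⟨a * a' + Q u • (involute b * b'), involute a * b' + b * a',
        add_mem (mul_mem ha ha')
          (Subalgebra.smul_mem _ (mul_mem (involute_adjoin_mem Q s hb) hb') _),
        add_mem (mul_mem (involute_adjoin_mem Q s ha) hb') (mul_mem hb ha'), ?_⟩
      have hau : a * ι Q u = ι Q u * involute a := by
        rw [ι_mul_adjoin Q s u hu (involute_adjoin_mem Q s ha), involute_involute]
      have hbu : b * ι Q u = ι Q u * involute b := by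
        rw [ι_mul_adjoin Q s u hu (involute_adjoin_mem Q s hb), involute_involute]
      have huu : ι Q u * ι Q u = algebraMap ℝ _ (Q u) := ι_sq_scalar Q u
      calc (a + ι Q u * b) * (a' + ι Q u * b')
          = a * a' + (a * ι Q u) * b' + ι Q u * (b * a') + ι Q u * ((b * ι Q u) * b') := by
            noncomm_ring
        _ = a * a' + ι Q u * (involute a * b') + ι Q u * (b * a')
              + (ι Q u * ι Q u) * (involute b * b') := by rw [hau, hbu]; noncomm_ring
        _ = a * a' + Q u • (involute b * b') + ι Q u * (involute a * b' + b * a') := by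
            rw [huu, Algebra.smul_def]; noncomm_ring
        _ = _ := by noncomm_ring

/-- Auxiliary version with an explicit orthogonal basis. -/
lemma contract_eq_zero_scalar_aux (Q : QuadraticForm ℝ V) {n : ℕ} (e : Module.Basis (Fin n) ℝ V)
    (horth : ∀ i j : Fin n, i ≠ j → QuadraticMap.polar Q (e i) (e j) = 0)
    (y : CliffordAlgebra Q) (hy : ∀ f : Module.Dual ℝ V, contractLeft f y = 0) :
    ∃ c : ℝ, y = algebraMap ℝ (CliffordAlgebra Q) c := by
  -- the subalgebras
  have key : ∀ k : ℕ, ∀ z : CliffordAlgebra Q,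
      (∀ f : Module.Dual ℝ V, contractLeft f z = 0) →
      z ∈ Algebra.adjoin ℝ (ι Q '' (e '' {i : Fin n | (i : ℕ) < k})) →
      ∃ c : ℝ, z = algebraMap ℝ (CliffordAlgebra Q) c := by
    intro k
    induction k with
    | zero =>
        intro z _ hz
        have hempty : (e '' {i : Fin n | (i : ℕ) < 0}) = ∅ := by
          simp
        rw [hempty, Set.image_empty, Algebra.adjoin_empty, Algebra.mem_bot] at hz
        obtain ⟨c, hc⟩ := hz
        exact ⟨c, hc.symm⟩
    | succ k ih =>
        intro z hz hzmem
        by_cases hk : k < n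
        · set i₀ : Fin n := ⟨k, hk⟩ with hi₀
          have hset : {i : Fin n | (i : ℕ) < k + 1} = insert i₀ {i : Fin n | (i : ℕ) < k} := by
            ext i
            simp only [Set.mem_setOf_eq, Set.mem_insert_iff]
            constructor
            · intro h
              rcases Nat.lt_succ_iff_lt_or_eq.mp h with h' | h'
              · exact Or.inr h'
              · exact Or.inl (Fin.ext h')
            · rintro (rfl | h)
              · exact Nat.lt_succ_self k
              · exact Nat.lt_succ_of_lt h
          rw [hset, Set.image_insert_eq] at hzmem
          obtain ⟨a, b, ha, hb, rfl⟩ := adjoin_insert_decompose Q _ _ (by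
            rintro v ⟨j, hj, rfl⟩
            exact horth i₀ j (by rintro rfl; exact Nat.lt_irrefl k hj)) hzmem
          -- contract with the dual basis vector
          have hcoord : ∀ v ∈ e '' {i : Fin n | (i : ℕ) < k}, e.coord i₀ v = 0 := by
            rintro v ⟨j, hj, rfl⟩
            have hne : j ≠ i₀ := by rintro rfl; exact Nat.lt_irrefl k hj
            simp [Module.Basis.coord_apply, Module.Basis.repr_self, Finsupp.single_apply_eq_zero, hne]
          have hfa : contractLeft (e.coord i₀) a = 0 :=
            contract_adjoin_eq_zero Q _ _ hcoord ha
          have hfb : contractLeft (e.coord i₀) b = 0 :=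
            contract_adjoin_eq_zero Q _ _ hcoord hb
          have hb0 : b = 0 := by
            have := hz (e.coord i₀)
            rw [map_add, hfa, zero_add, contractLeft_ι_mul, hfb, mul_zero, sub_zero,
              Module.Basis.coord_apply, Module.Basis.repr_self, Finsupp.single_eq_same, one_smul] at this
            exact this
          rw [hb0, mul_zero, add_zero] at hz hzmem ⊢
          exact ih a hz ha
        · have hset : {i : Fin n | (i : ℕ) < k + 1} = {i : Fin n | (i : ℕ) < k} := by
            ext i
            have := i.isLt
            simp only [Set.mem_setOf_eq]
            omega
          rw [hset] at hzmem
          exact ih z hz hzmem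
  have hv : ∀ v : V, ι Q v ∈ Algebra.adjoin ℝ (ι Q '' (e '' {i : Fin n | (i : ℕ) < n})) := by
    intro v
    rw [← e.sum_repr v, map_sum]
    refine sum_mem fun i _ => ?_
    rw [map_smul]
    refine Subalgebra.smul_mem _ (Algebra.subset_adjoin ?_) _
    exact Set.mem_image_of_mem _ (Set.mem_image_of_mem _ (i.isLt : i ∈ {i : Fin n | (i : ℕ) < n}))
  have htop : ∀ z : CliffordAlgebra Q,
      z ∈ Algebra.adjoin ℝ (ι Q '' (e '' {i : Fin n | (i : ℕ) < n})) := by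
    intro z
    induction z using CliffordAlgebra.induction with
    | algebraMap r => exact algebraMap_mem _ r
    | ι v => exact hv v
    | mul a b ha hb => exact mul_mem ha hb
    | add a b ha hb => exact add_mem ha hb
  exact key n y hy (htop y)

/-- An element of the Clifford algebra killed by all contractions is a scalar. -/
lemma contract_eq_zero_scalar (Q : QuadraticForm ℝ V) [FiniteDimensional ℝ V]
    (y : CliffordAlgebra Q) (hy : ∀ f : Module.Dual ℝ V, contractLeft f y = 0) :
    ∃ c : ℝ, y = algebraMap ℝ (CliffordAlgebra Q) c := by
  obtain ⟨e, he⟩ := LinearMap.BilinForm.exists_orthogonal_basis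
    (QuadraticForm.associated_isSymm ℝ Q)
  refine contract_eq_zero_scalar_aux Q e (fun i j hij => ?_) y hy
  have hz : QuadraticMap.associatedHom ℝ Q (e i) (e j) = 0 := he hij
  have h2 : (2 • QuadraticMap.associatedHom ℝ Q) (e i) (e j) =
      Q.polarBilin (e i) (e j) := by
    rw [QuadraticMap.two_nsmul_associated]
  rw [← QuadraticMap.polarBilin_apply_apply, ← h2]
  simp only [LinearMap.smul_apply, hz, smul_zero]

/-- An element twisted-commuting with all vectors is a scalar (nondegenerate case). -/
lemma twisted_central_scalar (Q : QuadraticForm ℝ V) [FiniteDimensional ℝ V]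
    (hnd : ∀ v : V, (∀ w : V, QuadraticMap.polar Q v w = 0) → v = 0)
    (w : CliffordAlgebra Q)
    (hw : ∀ v : V, w * ι Q v = ι Q v * involute w) :
    ∃ c : ℝ, w = algebraMap ℝ (CliffordAlgebra Q) c := by
  have hinj : Function.Injective (Q.polarBilin : V →ₗ[ℝ] Module.Dual ℝ V) := by
    intro v₁ v₂ h12
    have h0 : Q.polarBilin (v₁ - v₂) = 0 := by rw [map_sub, h12, sub_self]
    have := hnd (v₁ - v₂) fun u => by
      have := LinearMap.congr_fun h0 u
      simpa [QuadraticMap.polarBilin_apply_apply] using this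
    exact sub_eq_zero.mp this
  have hsurj : Function.Surjective (Q.polarBilin : V →ₗ[ℝ] Module.Dual ℝ V) :=
    (LinearMap.injective_iff_surjective_of_finrank_eq_finrank
      Subspace.dual_finrank_eq.symm).mp hinj
  have hcontr : ∀ f : Module.Dual ℝ V, contractLeft f (involute w) = 0 := by
    intro f
    obtain ⟨v, rfl⟩ := hsurj f
    rw [← ι_mul_sub_involute Q v (involute w), involute_involute, ← hw v, sub_self]
  obtain ⟨c, hc⟩ := contract_eq_zero_scalar Q (involute w) hcontr
  refine ⟨c, ?_⟩
  calc w = involute (involute w) := (involute_involute w).symm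
    _ = involute (algebraMap ℝ (CliffordAlgebra Q) c) := by rw [hc]
    _ = algebraMap ℝ (CliffordAlgebra Q) c := by rw [AlgHom.commutes]

end Auxiliary

/-- For every `x` in the Clifford group `Γ(Φ)` of a nondegenerate quadratic form `Φ` on a
finite-dimensional real vector space, the norm `N(x) = x·x̄` (where `x̄ = t(α(x))` is the
conjugate, i.e. `reverse (involute x)`) lies in `ℝ*·1`. -/
theorem clifford_group_norm_is_scalar {V : Type*} [AddCommGroup V] [Module ℝ V]
    [FiniteDimensional ℝ V] (Q : QuadraticForm ℝ V)
    (hnd : ∀ v : V, (∀ w : V, QuadraticMap.polar Q v w = 0) → v = 0)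
    (x : (CliffordAlgebra Q)ˣ)
    (hx : ∀ v : V, involute (x : CliffordAlgebra Q) * ι Q v * ↑x⁻¹ ∈ Set.range (ι Q)) :
    ∃ c : ℝ, c ≠ 0 ∧
      (x : CliffordAlgebra Q) * reverse (involute (x : CliffordAlgebra Q)) =
        algebraMap ℝ (CliffordAlgebra Q) c := by
  have huu' : (↑x : CliffordAlgebra Q) * ↑x⁻¹ = 1 := x.mul_inv
  have hu'u : (↑x⁻¹ : CliffordAlgebra Q) * ↑x = 1 := x.inv_mul
  have hrr : reverse (Q := Q) ↑x * reverse (Q := Q) (↑x⁻¹ : CliffordAlgebra Q) = 1 := by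
    rw [← reverse.map_mul, hu'u, reverse.map_one]
  have hWinv : involute (reverse (↑x : CliffordAlgebra Q) * involute (↑x : CliffordAlgebra Q)) =
      reverse (involute (↑x : CliffordAlgebra Q)) * (↑x : CliffordAlgebra Q) := by
    rw [map_mul, involute_involute, reverse_involute]
  have hrel : ∀ v : V,
      (reverse (↑x : CliffordAlgebra Q) * involute (↑x : CliffordAlgebra Q)) * ι Q v =
        ι Q v * involute (reverse (↑x : CliffordAlgebra Q) * involute (↑x : CliffordAlgebra Q)) := by
    intro v
    obtain ⟨w, hw⟩ := hx v
    have E : involute (↑x : CliffordAlgebra Q) * ι Q v * ↑x⁻¹ = ι Q w := hw.symm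
    have E2 : reverse (Q := Q) (↑x⁻¹ : CliffordAlgebra Q) *
        (ι Q v * reverse (involute (↑x : CliffordAlgebra Q))) = ι Q w := by
      calc reverse (Q := Q) (↑x⁻¹ : CliffordAlgebra Q) *
            (ι Q v * reverse (involute (↑x : CliffordAlgebra Q)))
          = reverse (involute (↑x : CliffordAlgebra Q) * ι Q v * ↑x⁻¹) := by
            simp only [reverse.map_mul, reverse_ι, mul_assoc]
        _ = reverse (ι Q w) := by rw [E]
        _ = ι Q w := reverse_ι w
    have E3 : reverse (Q := Q) (↑x⁻¹ : CliffordAlgebra Q) *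
        (ι Q v * reverse (involute (↑x : CliffordAlgebra Q))) =
        involute (↑x : CliffordAlgebra Q) * ι Q v * ↑x⁻¹ := E2.trans E.symm
    have e4 : reverse (Q := Q) (↑x : CliffordAlgebra Q) *
        (reverse (Q := Q) (↑x⁻¹ : CliffordAlgebra Q) *
          (ι Q v * reverse (involute (↑x : CliffordAlgebra Q)))) =
        ι Q v * reverse (involute (↑x : CliffordAlgebra Q)) := by
      rw [← mul_assoc, hrr, one_mul]
    rw [hWinv]
    calc (reverse (↑x : CliffordAlgebra Q) * involute (↑x : CliffordAlgebra Q)) * ι Q v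
        = reverse (Q := Q) (↑x : CliffordAlgebra Q) *
            (involute (↑x : CliffordAlgebra Q) * ι Q v * ↑x⁻¹) * (↑x : CliffordAlgebra Q) := by
          simp only [mul_assoc, hu'u, mul_one]
      _ = reverse (Q := Q) (↑x : CliffordAlgebra Q) *
            (reverse (Q := Q) (↑x⁻¹ : CliffordAlgebra Q) *
              (ι Q v * reverse (involute (↑x : CliffordAlgebra Q)))) * (↑x : CliffordAlgebra Q) := by
          rw [E3]
      _ = (ι Q v * reverse (involute (↑x : CliffordAlgebra Q))) * (↑x : CliffordAlgebra Q) := by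
          rw [e4]
      _ = ι Q v * (reverse (involute (↑x : CliffordAlgebra Q)) * (↑x : CliffordAlgebra Q)) := by
          rw [mul_assoc]
  obtain ⟨c, hc⟩ := twisted_central_scalar Q hnd _ hrel
  have hτ : reverse (involute (↑x : CliffordAlgebra Q)) * (↑x : CliffordAlgebra Q) =
      algebraMap ℝ (CliffordAlgebra Q) c := by
    have := congrArg (reverse (Q := Q)) hc
    rwa [reverse.map_mul, reverse_reverse, reverse.commutes] at this
  refine ⟨c, ?_, ?_⟩
  · rintro rfl
    rw [map_zero] at hτ
    have hτ0 : reverse (involute (↑x : CliffordAlgebra Q)) = 0 := by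
      have := congrArg (· * (↑x⁻¹ : CliffordAlgebra Q)) hτ
      simpa [mul_assoc, huu'] using this
    have hinv0 : involute (↑x : CliffordAlgebra Q) = 0 := by
      have h1 : involute (↑x : CliffordAlgebra Q) =
          reverse (Q := Q) (reverse (involute (↑x : CliffordAlgebra Q))) :=
        (reverse_reverse _).symm
      rw [hτ0, map_zero] at h1
      exact h1
    have hu0 : (↑x : CliffordAlgebra Q) = 0 := by
      calc (↑x : CliffordAlgebra Q) = involute (involute (↑x : CliffordAlgebra Q)) :=
            (involute_involute _).symm
        _ = involute 0 := by rw [hinv0]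
        _ = 0 := map_zero _
    have h10 : (1 : CliffordAlgebra Q) = 0 := by rw [← huu', hu0, zero_mul]
    exact one_ne_zero h10
  · calc (↑x : CliffordAlgebra Q) * reverse (involute (↑x : CliffordAlgebra Q))
        = (↑x : CliffordAlgebra Q) * reverse (involute (↑x : CliffordAlgebra Q)) *
            ((↑x : CliffordAlgebra Q) * ↑x⁻¹) := by rw [huu', mul_one]
      _ = (↑x : CliffordAlgebra Q) *
            (reverse (involute (↑x : CliffordAlgebra Q)) * (↑x : CliffordAlgebra Q)) * ↑x⁻¹ := by
          simp only [mul_assoc]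
      _ = (↑x : CliffordAlgebra Q) * algebraMap ℝ (CliffordAlgebra Q) c * ↑x⁻¹ := by rw [hτ]
      _ = algebraMap ℝ (CliffordAlgebra Q) c * ((↑x : CliffordAlgebra Q) * ↑x⁻¹) := by
          rw [← Algebra.commutes, mul_assoc]
      _ = algebraMap ℝ (CliffordAlgebra Q) c := by rw [huu', mul_one]
end

section
/- If x ∈ Cl⁰₃ (the even part of the Clifford algebra of the negative-definite form on ℝ³) satisfies N(x) = 1, then x v x⁻¹ ∈ ℝ³ for all v ∈ ℝ³; consequently Spin(3) = {a·1 + b·e₂e₃ + c·e₃e₁ + d·e₁e₂ : a² + b² + c² + d² = 1}, which is isomorphic to the group of unit quaternions SU(2). -/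
open CliffordAlgebra
open scoped Quaternion

/-- Membership in `Pin(n)`: `x` lies in the Clifford group `Γₙ` and has norm `N(x) = 1`. -/
def InPin (n : ℕ) (x : (CliffordAlgebra (negDefQF n))ˣ) : Prop :=
  (∀ v : Fin n → ℝ,
    involute (x : CliffordAlgebra (negDefQF n)) * ι (negDefQF n) v * ↑x⁻¹ ∈
      Set.range (ι (negDefQF n))) ∧
  (x : CliffordAlgebra (negDefQF n)) * reverse (involute (x : CliffordAlgebra (negDefQF n))) = 1

/-- Membership in `Spin(n)`: membership in `Pin(n)` together with evenness. -/
def InSpin (n : ℕ) (x : (CliffordAlgebra (negDefQF n))ˣ) : Prop :=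
  InPin n x ∧ (x : CliffordAlgebra (negDefQF n)) ∈ evenOdd (negDefQF n) 0

namespace SpinAux

noncomputable abbrev Q3 : QuadraticForm ℝ (Fin 3 → ℝ) := negDefQF 3
noncomputable abbrev Cl := CliffordAlgebra Q3

noncomputable def E (i : Fin 3) : Cl := ι Q3 (Pi.single i 1)

lemma Q3_single (i : Fin 3) : Q3 (Pi.single i 1) = -1 := by
  simp [negDefQF, QuadraticMap.weightedSumSquares_apply, Fin.sum_univ_three]
  fin_cases i <;> simp [Pi.single_apply]

lemma polar_single {i j : Fin 3} (h : i ≠ j) :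
    QuadraticMap.polar Q3 (Pi.single i 1) (Pi.single j 1) = 0 := by
  simp only [QuadraticMap.polar, negDefQF, QuadraticMap.weightedSumSquares_apply]
  rw [Fin.sum_univ_three, Fin.sum_univ_three, Fin.sum_univ_three]
  fin_cases i <;> fin_cases j <;> simp_all [Pi.single_apply]

lemma Esq (i : Fin 3) (x : Cl) : E i * (E i * x) = -x := by
  rw [← mul_assoc, E, ι_sq_scalar, Q3_single, map_neg, map_one, neg_one_mul]

lemma Eswap {i j : Fin 3} (h : i ≠ j) (x : Cl) : E i * (E j * x) = -(E j * (E i * x)) := by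
  rw [← mul_assoc, ← mul_assoc, E, E, ι_mul_ι_comm, polar_single h, map_zero, zero_sub, neg_mul]

lemma E10 (x : Cl) : E 1 * (E 0 * x) = -(E 0 * (E 1 * x)) := Eswap (by decide) x
lemma E20 (x : Cl) : E 2 * (E 0 * x) = -(E 0 * (E 2 * x)) := Eswap (by decide) x
lemma E21 (x : Cl) : E 2 * (E 1 * x) = -(E 1 * (E 2 * x)) := Eswap (by decide) x

lemma Esq' (i : Fin 3) : E i * E i = -1 := by
  rw [E, ι_sq_scalar, Q3_single, map_neg, map_one]

lemma E10' : E 1 * E 0 = -(E 0 * E 1) := by have := E10 1; simpa using this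
lemma E20' : E 2 * E 0 = -(E 0 * E 2) := by have := E20 1; simpa using this
lemma E21' : E 2 * E 1 = -(E 1 * E 2) := by have := E21 1; simpa using this

noncomputable def qb : QuaternionAlgebra.Basis Cl (-1 : ℝ) (0 : ℝ) (-1 : ℝ) where
  i := E 0 * E 1
  j := E 1 * E 2
  k := E 2 * E 0
  i_mul_i := by
    simp [mul_assoc, E10, E20, E21, E10', E20', E21', Esq, Esq', neg_smul, one_smul]
  j_mul_j := by
    simp [mul_assoc, E10, E20, E21, E10', E20', E21', Esq, Esq', neg_smul, one_smul]
  i_mul_j := by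
    simp [mul_assoc, E10, E20, E21, E10', E20', E21', Esq, Esq', neg_smul, one_smul]
  j_mul_i := by
    simp [mul_assoc, E10, E20, E21, E10', E20', E21', Esq, Esq', neg_smul, one_smul]

lemma qb_i : qb.i = E 0 * E 1 := rfl
lemma qb_j : qb.j = E 1 * E 2 := rfl
lemma qb_k : qb.k = E 2 * E 0 := rfl

noncomputable def ω : Cl := E 0 * (E 1 * E 2)

lemma ωi : ω * qb.i = -(E 2) := by
  simp [ω, qb, mul_assoc, E10, E20, E21, E10', E20', E21', Esq, Esq']
lemma iω : qb.i * ω = -(E 2) := by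
  simp [ω, qb, mul_assoc, E10, E20, E21, E10', E20', E21', Esq, Esq']
lemma ωj : ω * qb.j = -(E 0) := by
  simp [ω, qb, mul_assoc, E10, E20, E21, E10', E20', E21', Esq, Esq']
lemma jω : qb.j * ω = -(E 0) := by
  simp [ω, qb, mul_assoc, E10, E20, E21, E10', E20', E21', Esq, Esq']
lemma ωk : ω * qb.k = -(E 1) := by
  simp [ω, qb, mul_assoc, E10, E20, E21, E10', E20', E21', Esq, Esq']
lemma kω : qb.k * ω = -(E 1) := by
  simp [ω, qb, mul_assoc, E10, E20, E21, E10', E20', E21', Esq, Esq']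

noncomputable def φ : ℍ[ℝ] →ₐ[ℝ] Cl := qb.liftHom

lemma phi_apply (q : ℍ[ℝ]) :
    φ q = algebraMap ℝ Cl q.re + q.imI • qb.i + q.imJ • qb.j + q.imK • qb.k := rfl

lemma phi_inj : Function.Injective φ := φ.toRingHom.injective

lemma ι_eq (m : Fin 3 → ℝ) : ι Q3 m = m 0 • E 0 + m 1 • E 1 + m 2 • E 2 := by
  have h : m = (m 0) • (Pi.single 0 1 : Fin 3 → ℝ) + (m 1) • (Pi.single 1 1 : Fin 3 → ℝ)
      + (m 2) • (Pi.single 2 1 : Fin 3 → ℝ) := by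
    funext x; fin_cases x <;> simp
  conv_lhs => rw [h]
  simp [E, map_add, map_smul]

lemma involute_E (i : Fin 3) : involute (E i) = -(E i) := involute_ι _
lemma reverse_E (i : Fin 3) : reverse (E i) = E i := reverse_ι _

lemma involute_phi (q : ℍ[ℝ]) : involute (φ q) = φ q := by
  simp [phi_apply, qb_i, qb_j, qb_k, map_add, map_smul, map_mul, involute_E, AlgHom.commutes,
    neg_mul_neg]

lemma reverse_phi (q : ℍ[ℝ]) : reverse (φ q) = φ (star q) := by
  have h01 : reverse (E 0 * E 1) = -(E 0 * E 1) := by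
    rw [reverse.map_mul, reverse_E, reverse_E, E10']
  have h12 : reverse (E 1 * E 2) = -(E 1 * E 2) := by
    rw [reverse.map_mul, reverse_E, reverse_E, E21']
  have h20 : reverse (E 2 * E 0) = -(E 2 * E 0) := by
    rw [reverse.map_mul, reverse_E, reverse_E, E20', neg_neg]
  simp only [phi_apply, qb_i, qb_j, qb_k, map_add, map_smul, reverse.commutes, h01, h12, h20,
    Quaternion.re_star, Quaternion.imI_star, Quaternion.imJ_star, Quaternion.imK_star,
    smul_neg, neg_smul]

lemma phi_mem_even (q : ℍ[ℝ]) : φ q ∈ evenOdd Q3 0 := by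
  rw [phi_apply]
  refine Submodule.add_mem _ (Submodule.add_mem _ (Submodule.add_mem _
    (SetLike.algebraMap_mem_graded _ _) ?_) ?_) ?_ <;>
  exact Submodule.smul_mem _ _ (ι_mul_ι_mem_evenOdd_zero Q3 _ _)

lemma ιι_mem_range (m₁ m₂ : Fin 3 → ℝ) : ∃ p : ℍ[ℝ], φ p = ι Q3 m₁ * ι Q3 m₂ := by
  refine ⟨⟨-(m₁ 0 * m₂ 0 + m₁ 1 * m₂ 1 + m₁ 2 * m₂ 2),
    m₁ 0 * m₂ 1 - m₁ 1 * m₂ 0, m₁ 1 * m₂ 2 - m₁ 2 * m₂ 1, m₁ 2 * m₂ 0 - m₁ 0 * m₂ 2⟩, ?_⟩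
  erw [phi_apply, ι_eq m₁, ι_eq m₂]
  simp only [qb_i, qb_j, qb_k, add_mul, mul_add, smul_mul_assoc, mul_smul_comm,
    E10', E20', E21', Esq', Algebra.algebraMap_eq_smul_one]
  module

lemma even_to_range : ∀ x ∈ evenOdd Q3 0, ∃ q : ℍ[ℝ], φ q = x := by
  intro x hx
  induction x, hx using even_induction with
  | algebraMap r => exact ⟨algebraMap ℝ ℍ[ℝ] r, φ.commutes r⟩
  | add a b ha hb iha ihb =>
    obtain ⟨p, hp⟩ := iha; obtain ⟨q, hq⟩ := ihb
    exact ⟨p + q, by rw [map_add, hp, hq]⟩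
  | ι_mul_ι_mul m₁ m₂ a ha ih =>
    obtain ⟨q, hq⟩ := ih
    obtain ⟨p, hp⟩ := ιι_mem_range m₁ m₂
    exact ⟨p * q, by rw [map_mul, hp, hq]⟩

lemma ω_comm (q : ℍ[ℝ]) : ω * φ q = φ q * ω := by
  rw [phi_apply]
  simp only [mul_add, add_mul, Algebra.commutes, mul_smul_comm, smul_mul_assoc,
    ωi, iω, ωj, jω, ωk, kω]

lemma pure_conj (q p : ℍ[ℝ]) (hp : p.re = 0) : (q * p * star q).re = 0 := by
  simp only [Quaternion.re_mul, Quaternion.imI_mul, Quaternion.imJ_mul, Quaternion.imK_mul,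
    Quaternion.re_star, Quaternion.imI_star, Quaternion.imJ_star, Quaternion.imK_star, hp]
  ring

lemma ω_mul_phi_pure (b c d : ℝ) :
    ω * φ ⟨0, b, c, d⟩ = (-c) • E 0 + (-d) • E 1 + (-b) • E 2 := by
  erw [phi_apply]
  simp only [map_zero, zero_add, mul_add, mul_smul_comm, ωi, ωj, ωk, smul_neg, neg_smul]
  abel

lemma ι_as_ω (m : Fin 3 → ℝ) : ι Q3 m = ω * φ ⟨0, -(m 2), -(m 0), -(m 1)⟩ := by
  rw [ω_mul_phi_pure, ι_eq]
  simp [neg_neg]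

lemma conj_mem (q : ℍ[ℝ]) (m : Fin 3 → ℝ) :
    φ q * ι Q3 m * φ (star q) ∈ Set.range (ι Q3) := by
  have hp : ∃ p : ℍ[ℝ], p.re = 0 ∧ ι Q3 m = ω * φ p :=
    ⟨⟨0, -(m 2), -(m 0), -(m 1)⟩, rfl, ι_as_ω m⟩
  obtain ⟨p, hp0, hpι⟩ := hp
  rw [hpι, ← mul_assoc, ← ω_comm, mul_assoc, mul_assoc, ← map_mul, ← map_mul]
  set r := q * (p * star q) with hr
  have hre : r.re = 0 := by
    rw [hr, ← mul_assoc]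
    exact pure_conj q p hp0
  have hdec : r = (⟨0, r.imI, r.imJ, r.imK⟩ : ℍ[ℝ]) := by
    ext <;> simp [hre]
  refine ⟨![-(r.imJ), -(r.imK), -(r.imI)], ?_⟩
  rw [ι_eq, hdec, ω_mul_phi_pure]
  simp [neg_neg]

lemma norm_one_of (q : ℍ[ℝ]) (h : φ q * φ (star q) = 1) : q * star q = 1 := by
  apply phi_inj
  rw [map_mul, h, map_one]

lemma key : ∀ x : Clˣ, (x : Cl) ∈ evenOdd Q3 0 →
    (x : Cl) * reverse (involute (x : Cl)) = 1 →
    ∀ v : Fin 3 → ℝ, (x : Cl) * ι Q3 v * ↑x⁻¹ ∈ Set.range (ι Q3) := by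
  intro x hx hN v
  obtain ⟨q, hq⟩ := even_to_range _ hx
  have hrev : reverse (involute (x : Cl)) = φ (star q) := by
    rw [← hq, involute_phi, reverse_phi]
  have hinv : (↑x⁻¹ : Cl) = φ (star q) := by
    apply Units.inv_eq_of_mul_eq_one_right
    rw [← hrev]; exact hN
  rw [hinv, ← hq]
  exact conj_mem q v

lemma phi_mk (a b c d : ℝ) :
    φ ⟨a, b, c, d⟩ = algebraMap ℝ Cl a + b • qb.i + c • qb.j + d • qb.k := rfl

lemma normSq_mk (a b c d : ℝ) :
    Quaternion.normSq (⟨a, b, c, d⟩ : ℍ[ℝ]) = a ^ 2 + b ^ 2 + c ^ 2 + d ^ 2 := by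
  erw [Quaternion.normSq_def']

lemma rev_inv_phi (q : ℍ[ℝ]) : reverse (involute (φ q)) = φ (star q) := by
  rw [involute_phi, reverse_phi]

end SpinAux

open SpinAux in
/-- If `x ∈ Cl⁰₃` satisfies `N(x) = 1` then `x v x⁻¹ ∈ ℝ³` for all `v ∈ ℝ³`; consequently
`Spin(3) = {a·1 + b·e₂e₃ + c·e₃e₁ + d·e₁e₂ : a² + b² + c² + d² = 1}`, which is isomorphic
to the group of unit quaternions `SU(2)`. -/
theorem spin_three_eq_unit_quaternions :
    (∀ x : (CliffordAlgebra (negDefQF 3))ˣ,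
      (x : CliffordAlgebra (negDefQF 3)) ∈ evenOdd (negDefQF 3) 0 →
      (x : CliffordAlgebra (negDefQF 3)) *
          reverse (involute (x : CliffordAlgebra (negDefQF 3))) = 1 →
      ∀ v : Fin 3 → ℝ,
        (x : CliffordAlgebra (negDefQF 3)) * ι (negDefQF 3) v * ↑x⁻¹ ∈
          Set.range (ι (negDefQF 3))) ∧
    (∀ x : (CliffordAlgebra (negDefQF 3))ˣ, InSpin 3 x ↔
      ∃ a b c d : ℝ, a ^ 2 + b ^ 2 + c ^ 2 + d ^ 2 = 1 ∧
        (x : CliffordAlgebra (negDefQF 3)) =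
          algebraMap ℝ (CliffordAlgebra (negDefQF 3)) a +
            b • (ι (negDefQF 3) (Pi.single 1 1) * ι (negDefQF 3) (Pi.single 2 1)) +
            c • (ι (negDefQF 3) (Pi.single 2 1) * ι (negDefQF 3) (Pi.single 0 1)) +
            d • (ι (negDefQF 3) (Pi.single 0 1) * ι (negDefQF 3) (Pi.single 1 1))) ∧
    ∃ f : {x : (CliffordAlgebra (negDefQF 3))ˣ // InSpin 3 x} → unitary ℍ[ℝ],
      Function.Bijective f ∧
      ∀ (x y : (CliffordAlgebra (negDefQF 3))ˣ) (hx : InSpin 3 x) (hy : InSpin 3 y)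
        (hxy : InSpin 3 (x * y)), f ⟨x * y, hxy⟩ = f ⟨x, hx⟩ * f ⟨y, hy⟩ := by
  refine ⟨key, ?_, ?_⟩
  · intro x
    constructor
    · rintro ⟨⟨hpin1, hpin2⟩, heven⟩
      obtain ⟨q, hq⟩ := even_to_range _ heven
      have hn1 : q * star q = 1 := by
        apply norm_one_of
        rw [← rev_inv_phi, hq]
        exact hpin2
      have hns : Quaternion.normSq q = 1 := by
        have h := (Quaternion.self_mul_star q).symm.trans hn1
        rw [show (1 : ℍ[ℝ]) = ((1 : ℝ) : ℍ[ℝ]) from (Quaternion.coe_one).symm,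
          Quaternion.coe_inj] at h
        exact h
      refine ⟨q.re, q.imJ, q.imK, q.imI, ?_, ?_⟩
      · have := Quaternion.normSq_def' q
        rw [hns] at this
        linarith
      · rw [← hq, phi_apply]
        simp only [qb_i, qb_j, qb_k, E]
        abel
    · rintro ⟨a, b, c, d, h1, hx⟩
      have hq : φ ⟨a, d, b, c⟩ = (x : CliffordAlgebra (negDefQF 3)) := by
        rw [hx, phi_mk]
        simp only [qb_i, qb_j, qb_k, E]
        abel
      have hns : Quaternion.normSq (⟨a, d, b, c⟩ : ℍ[ℝ]) = 1 := by
        rw [normSq_mk]; linarith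
      have hN : (x : CliffordAlgebra (negDefQF 3)) *
          reverse (involute (x : CliffordAlgebra (negDefQF 3))) = 1 := by
        erw [← hq, rev_inv_phi, ← map_mul, Quaternion.self_mul_star, hns]
        exact_mod_cast map_one φ
      have heven : (x : CliffordAlgebra (negDefQF 3)) ∈ evenOdd (negDefQF 3) 0 :=
        hq ▸ phi_mem_even _
      refine ⟨⟨?_, hN⟩, heven⟩
      intro v
      have hinv : involute (x : CliffordAlgebra (negDefQF 3)) =
          (x : CliffordAlgebra (negDefQF 3)) := by erw [← hq, involute_phi]
      rw [hinv]
      exact key x heven hN v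
  · have hspec : ∀ s : {x : (CliffordAlgebra (negDefQF 3))ˣ // InSpin 3 x},
        ∃ q : ℍ[ℝ], φ q = ((s : (CliffordAlgebra (negDefQF 3))ˣ) : CliffordAlgebra (negDefQF 3)) :=
      fun s => even_to_range _ s.2.2
    choose g hg using hspec
    have hg1 : ∀ s, g s * star (g s) = 1 := by
      intro s
      apply norm_one_of
      rw [← rev_inv_phi, hg s]
      exact s.2.1.2
    have hmem : ∀ s, g s ∈ unitary ℍ[ℝ] := by
      intro s
      refine Unitary.mem_iff.mpr ⟨?_, hg1 s⟩
      rw [Quaternion.star_mul_self, ← Quaternion.self_mul_star, hg1 s]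
    refine ⟨fun s => ⟨g s, hmem s⟩, ⟨?_, ?_⟩, ?_⟩
    · intro s t h
      have : g s = g t := congrArg Subtype.val h
      have hv : ((s : (CliffordAlgebra (negDefQF 3))ˣ) : CliffordAlgebra (negDefQF 3))
          = ((t : (CliffordAlgebra (negDefQF 3))ˣ) : CliffordAlgebra (negDefQF 3)) := by
        rw [← hg s, ← hg t, this]
      exact Subtype.ext (Units.ext hv)
    · intro u
      obtain ⟨hu1, hu2⟩ := Unitary.mem_iff.mp u.2
      set X : (CliffordAlgebra (negDefQF 3))ˣ :=
        ⟨φ u, φ (star (u : ℍ[ℝ])),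
          by rw [← map_mul, hu2, map_one], by rw [← map_mul, hu1, map_one]⟩ with hXdef
      have hXv : (X : CliffordAlgebra (negDefQF 3)) = φ (u : ℍ[ℝ]) := rfl
      have hN : (X : CliffordAlgebra (negDefQF 3)) *
          reverse (involute (X : CliffordAlgebra (negDefQF 3))) = 1 := by
        rw [hXv, rev_inv_phi, ← map_mul, hu2, map_one]
      have hXS : InSpin 3 X := by
        refine ⟨⟨?_, hN⟩, by rw [hXv]; exact phi_mem_even _⟩
        intro v
        rw [show involute (X : CliffordAlgebra (negDefQF 3)) =
          (X : CliffordAlgebra (negDefQF 3)) from by rw [hXv]; exact involute_phi _]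
        exact key X (by rw [hXv]; exact phi_mem_even _) hN v
      refine ⟨⟨X, hXS⟩, Subtype.ext (phi_inj ?_)⟩
      rw [hg]
    · intro x y hx hy hxy
      apply Subtype.ext
      apply phi_inj
      show φ (g ⟨x * y, hxy⟩) = φ (g ⟨x, hx⟩ * g ⟨y, hy⟩)
      rw [map_mul, hg, hg, hg]
      exact Units.val_mul x y
end
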